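/- arXiv:1503.01219 — 5 statements merged into one kernel-verified Lean document; each statement's English description precedes it below -/
import Mathlib

section
/- Let G be a finite connected graph of order n, and let P = {P₁, P₂, P₃} be a set of three longest paths of G. If f(G,P) > 0, then n ≥ (3·l(G) + Σ_{P∈P} |X_P(P)| + 3)/2, where X_P(P) = V(P) \ (V(P') ∪ V(P'')) with {P',P''} = P \ {P}. -/
open SimpleGraph

noncomputable section

/-- The maximum length (number of edges) of a path in `G`. -/
def maxPathLength {V : Type} (G : SimpleGraph V) : ℕ :=
  sSup {n : ℕ | ∃ (a b : V) (q : G.Walk a b), q.IsPath ∧ q.length = n}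

/-- `p` is a longest path of `G`: a path whose length equals `maxPathLength G`. -/
def IsLongestPath {V : Type} (G : SimpleGraph V) {u v : V} (p : G.Walk u v) : Prop :=
  p.IsPath ∧ p.length = maxPathLength G

/-- The vertex set of a walk. -/
def walkVerts {V : Type} {G : SimpleGraph V} {u v : V} (p : G.Walk u v) : Set V :=
  {x | x ∈ p.support}

/-- The distance `d_G(v, U)` from a vertex `v` to a set `U` of vertices. -/
def distToSet {V : Type} (G : SimpleGraph V) (v : V) (U : Set V) : ℕ :=
  sInf (G.dist v '' U)

/-- A walk bundled together with its endpoints, used to compare paths with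
different endpoints for (in)equality. -/
def pathSigma {V : Type} (G : SimpleGraph V) {u v : V} (p : G.Walk u v) :
    Σ a : V, Σ b : V, G.Walk a b := ⟨u, v, p⟩

/-- `f(G, {P₁, P₂}) = min_{v ∈ V(G)} (d_G(v, V(P₁)) + d_G(v, V(P₂)))`. -/
def fTwo {V : Type} (G : SimpleGraph V) {u₁ v₁ u₂ v₂ : V}
    (p₁ : G.Walk u₁ v₁) (p₂ : G.Walk u₂ v₂) : ℕ :=
  sInf (Set.range fun v : V => distToSet G v (walkVerts p₁) + distToSet G v (walkVerts p₂))

/-- `f(G, {P₁, P₂, P₃}) = min_{v ∈ V(G)} Σᵢ d_G(v, V(Pᵢ))`. -/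
def fThree {V : Type} (G : SimpleGraph V) {u₁ v₁ u₂ v₂ u₃ v₃ : V}
    (p₁ : G.Walk u₁ v₁) (p₂ : G.Walk u₂ v₂) (p₃ : G.Walk u₃ v₃) : ℕ :=
  sInf (Set.range fun v : V =>
    distToSet G v (walkVerts p₁) + distToSet G v (walkVerts p₂) + distToSet G v (walkVerts p₃))

/-- `q` is a subpath of `p` (i.e. a path "on" `p`). -/
def IsSubpath {V : Type} (G : SimpleGraph V) {a b u v : V}
    (q : G.Walk a b) (p : G.Walk u v) : Prop :=
  ∃ (r : G.Walk u a) (s : G.Walk b v), p = r.append (q.append s)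

/-- `q` is an `X`-`Y` path: a path meeting `X` exactly in its first end-vertex and
`Y` exactly in its last end-vertex. -/
def IsXYPath {V : Type} (G : SimpleGraph V) (X Y : Set V) {a b : V} (q : G.Walk a b) : Prop :=
  q.IsPath ∧ walkVerts q ∩ X = {a} ∧ walkVerts q ∩ Y = {b}

/-- `tCount G p X Y` is the number of `X`-`Y` paths that are subpaths of `p`
(counted without regard to orientation). -/
def tCount {V : Type} (G : SimpleGraph V) {u v : V} (p : G.Walk u v) (X Y : Set V) : ℕ :=
  Nat.card {q : Σ a : V, Σ b : V, G.Walk a b //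
    IsSubpath G q.2.2 p ∧ (IsXYPath G X Y q.2.2 ∨ IsXYPath G Y X q.2.2)}

/-- If `f(G, P) > 0` for a set `P` of three longest paths of a finite connected graph
of order `n`, then `n ≥ (3 l(G) + Σ_{P ∈ P} |X_P(P)| + 3) / 2`. -/
theorem order_lower_bound {V : Type} [Fintype V] (G : SimpleGraph V) (hG : G.Connected)
    {u₁ v₁ u₂ v₂ u₃ v₃ : V} (p₁ : G.Walk u₁ v₁) (p₂ : G.Walk u₂ v₂) (p₃ : G.Walk u₃ v₃)
    (h₁ : IsLongestPath G p₁) (h₂ : IsLongestPath G p₂) (h₃ : IsLongestPath G p₃)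
    (hne₁₂ : pathSigma G p₁ ≠ pathSigma G p₂)
    (hne₁₃ : pathSigma G p₁ ≠ pathSigma G p₃)
    (hne₂₃ : pathSigma G p₂ ≠ pathSigma G p₃)
    (hf : 0 < fThree G p₁ p₂ p₃) :
    (Fintype.card V : ℝ) ≥
      (3 * maxPathLength G +
        ((walkVerts p₁ \ (walkVerts p₂ ∪ walkVerts p₃)).ncard +
         (walkVerts p₂ \ (walkVerts p₁ ∪ walkVerts p₃)).ncard +
         (walkVerts p₃ \ (walkVerts p₁ ∪ walkVerts p₂)).ncard) + 3) / 2 := by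
  classical
  set l := maxPathLength G with hl
  set A := p₁.support.toFinset with hA
  set B := p₂.support.toFinset with hB
  set C := p₃.support.toFinset with hC
  have hWA : walkVerts p₁ = ↑A := by ext x; simp [walkVerts, hA]
  have hWB : walkVerts p₂ = ↑B := by ext x; simp [walkVerts, hB]
  have hWC : walkVerts p₃ = ↑C := by ext x; simp [walkVerts, hC]
  have hcardA : A.card = l + 1 := by
    rw [hA, List.toFinset_card_of_nodup h₁.1.support_nodup,
      SimpleGraph.Walk.length_support, h₁.2]
  have hcardB : B.card = l + 1 := by
    rw [hB, List.toFinset_card_of_nodup h₂.1.support_nodup,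
      SimpleGraph.Walk.length_support, h₂.2]
  have hcardC : C.card = l + 1 := by
    rw [hC, List.toFinset_card_of_nodup h₃.1.support_nodup,
      SimpleGraph.Walk.length_support, h₃.2]
  -- no vertex lies on all three paths
  have htriple : ∀ x : V, ¬ (x ∈ A ∧ x ∈ B ∧ x ∈ C) := by
    rintro x ⟨hxA, hxB, hxC⟩
    have hz : ∀ {a b : V} (p : G.Walk a b), x ∈ p.support →
        distToSet G x (walkVerts p) = 0 := by
      intro a b p hx
      have h0 : (0 : ℕ) ∈ G.dist x '' walkVerts p :=
        ⟨x, hx, G.dist_self⟩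
      exact Nat.sInf_eq_zero.mpr (Or.inl h0)
    have hval : distToSet G x (walkVerts p₁) + distToSet G x (walkVerts p₂) +
        distToSet G x (walkVerts p₃) = 0 := by
      rw [hz p₁ (by simpa [hA, List.mem_toFinset] using hxA),
        hz p₂ (by simpa [hB, List.mem_toFinset] using hxB),
        hz p₃ (by simpa [hC, List.mem_toFinset] using hxC)]
    have hle : fThree G p₁ p₂ p₃ ≤ 0 := hval ▸ Nat.sInf_le ⟨x, rfl⟩
    omega
  set t := A ∪ B ∪ C with ht
  have hcard : ∀ s : Finset V, s ⊆ t → s.card = ∑ x ∈ t, if x ∈ s then 1 else 0 := by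
    intro s hs
    rw [← Finset.card_filter]
    congr 1
    ext x
    simp only [Finset.mem_filter]
    exact ⟨fun h => ⟨hs h, h⟩, fun h => h.2⟩
  have key : 2 * t.card = A.card + B.card + C.card + (A \ (B ∪ C)).card +
      (B \ (A ∪ C)).card + (C \ (A ∪ B)).card := by
    have hAt : A ⊆ t := by intro x hx; simp [ht, hx]
    have hBt : B ⊆ t := by intro x hx; simp [ht, hx]
    have hCt : C ⊆ t := by intro x hx; simp [ht, hx]
    rw [hcard A hAt, hcard B hBt, hcard C hCt,
      hcard (A \ (B ∪ C)) (fun x hx => hAt (Finset.mem_sdiff.mp hx).1),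
      hcard (B \ (A ∪ C)) (fun x hx => hBt (Finset.mem_sdiff.mp hx).1),
      hcard (C \ (A ∪ B)) (fun x hx => hCt (Finset.mem_sdiff.mp hx).1)]
    rw [two_mul, ← Finset.sum_add_distrib, ← Finset.sum_add_distrib,
      ← Finset.sum_add_distrib, ← Finset.sum_add_distrib, ← Finset.sum_add_distrib]
    rw [Finset.card_eq_sum_ones t, ← Finset.sum_add_distrib]
    apply Finset.sum_congr rfl
    intro x hx
    have hx' : x ∈ A ∨ x ∈ B ∨ x ∈ C := by
      simpa [ht, Finset.mem_union, or_assoc] using hx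
    have h3 := htriple x
    by_cases hxA : x ∈ A <;> by_cases hxB : x ∈ B <;> by_cases hxC : x ∈ C <;>
      simp [hxA, hxB, hxC] at h3 hx' ⊢
  have hle : t.card ≤ Fintype.card V := Finset.card_le_univ t
  have hX₁ : (walkVerts p₁ \ (walkVerts p₂ ∪ walkVerts p₃)).ncard = (A \ (B ∪ C)).card := by
    rw [hWA, hWB, hWC, ← Finset.coe_union, ← Finset.coe_sdiff, Set.ncard_coe_finset]
  have hX₂ : (walkVerts p₂ \ (walkVerts p₁ ∪ walkVerts p₃)).ncard = (B \ (A ∪ C)).card := by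
    rw [hWA, hWB, hWC, ← Finset.coe_union, ← Finset.coe_sdiff, Set.ncard_coe_finset]
  have hX₃ : (walkVerts p₃ \ (walkVerts p₁ ∪ walkVerts p₂)).ncard = (C \ (A ∪ B)).card := by
    rw [hWA, hWB, hWC, ← Finset.coe_union, ← Finset.coe_sdiff, Set.ncard_coe_finset]
  have hnat : 3 * l + ((A \ (B ∪ C)).card + (B \ (A ∪ C)).card + (C \ (A ∪ B)).card) + 3
      ≤ 2 * Fintype.card V := by omega
  rw [ge_iff_le, div_le_iff₀ (by norm_num : (0:ℝ) < 2), hX₁, hX₂, hX₃]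
  have : ((3 * l + ((A \ (B ∪ C)).card + (B \ (A ∪ C)).card + (C \ (A ∪ B)).card) + 3 : ℕ) : ℝ)
      ≤ ((2 * Fintype.card V : ℕ) : ℝ) := Nat.cast_le.mpr hnat
  push_cast at this
  linarith
end
end

section
/- Let G be a finite connected graph, and let P be a set of three longest paths of G. Then for each P ∈ P, |X_P(P)| ≥ t_P(P)·(f(G,P) − 1), where, writing P \ {P} = {P₁, P₂}, t_P(P) denotes the number of V(P₁)-V(P₂) paths contained in P (subpaths of P meeting V(P₁) in exactly one end-vertex and V(P₂) in exactly the other end-vertex). -/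
open SimpleGraph

noncomputable section

/-! ### Auxiliary machinery -/

section Aux

variable {V : Type} {G : SimpleGraph V}

private lemma supp_drop {u a v : V} (r : G.Walk u a) (t : G.Walk a v) :
    ((r.append t).support).drop r.length = t.support := by
  induction r with
  | nil => simp
  | cons h r ih => simpa using ih t

private lemma supp_zero {u v : V} (p : G.Walk u v) : p.support[0]? = some u := by
  rw [p.support_eq_cons]; simp

private lemma supp_last {u v : V} (p : G.Walk u v) : p.support[p.length]? = some v := by
  induction p with
  | nil => rfl
  | cons h q ih => simpa using ih

private lemma walk_append_inj :
    ∀ {u a a' c : V} (r : G.Walk u a) (r' : G.Walk u a')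
      (t : G.Walk a c) (t' : G.Walk a' c), r.length = r'.length →
      r.append t = r'.append t' → a = a' ∧ HEq r r' ∧ HEq t t'
  | _, _, _, _, .nil, .nil, t, t', _, heq => by
    simp only [Walk.nil_append] at heq
    exact ⟨rfl, HEq.rfl, heq ▸ HEq.rfl⟩
  | _, _, _, _, .nil, .cons h r', t, t', hlen, _ => by simp at hlen
  | _, _, _, _, .cons h r, .nil, t, t', hlen, _ => by simp at hlen
  | _, _, _, _, .cons h r, .cons h' r', t, t', hlen, heq => by
    injection heq with h1 h2 h3 h4
    subst h2
    obtain ⟨hae, hrr, htt⟩ := walk_append_inj r r' t t' (by simpa using hlen) (eq_of_heq h4)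
    subst hae
    exact ⟨rfl, heq_of_eq (by rw [eq_of_heq hrr]), htt⟩

/-- The subtype of `X`-`Y` (or `Y`-`X`) subpaths of `p`, whose cardinality is `tCount`. -/
private def TT (G : SimpleGraph V) {u v : V} (p : G.Walk u v) (X Y : Set V) : Type :=
  {q : Σ a : V, Σ b : V, G.Walk a b //
    IsSubpath G q.2.2 p ∧ (IsXYPath G X Y q.2.2 ∨ IsXYPath G Y X q.2.2)}

private noncomputable def off {u v : V} {p : G.Walk u v} {X Y : Set V} (q : TT G p X Y) : ℕ :=
  q.2.1.choose.length

private lemma off_dec {u v : V} {p : G.Walk u v} {X Y : Set V} (q : TT G p X Y) :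
    ∃ (r : G.Walk u q.1.1) (s : G.Walk q.1.2.1 v),
      r.length = off q ∧ p = r.append (q.1.2.2.append s) :=
  ⟨q.2.1.choose, q.2.1.choose_spec.choose, rfl, q.2.1.choose_spec.choose_spec⟩

private lemma off_spec {u v : V} {p : G.Walk u v} {X Y : Set V} (q : TT G p X Y) :
    ∃ s : G.Walk q.1.2.1 v, p.support.drop (off q) = q.1.2.2.support ++ s.support.tail := by
  obtain ⟨r, s, hr, hs⟩ := off_dec q
  have key := supp_drop r (q.1.2.2.append s)
  rw [← hs, hr] at key
  rw [Walk.support_append] at key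
  exact ⟨s, key⟩

private lemma off_getElem {u v : V} {p : G.Walk u v} {X Y : Set V} (q : TT G p X Y)
    (k : ℕ) (hk : k ≤ q.1.2.2.length) :
    p.support[off q + k]? = q.1.2.2.support[k]? := by
  obtain ⟨s, hs⟩ := off_spec q
  rw [← List.getElem?_drop, hs, List.getElem?_append_left]
  rw [Walk.length_support]
  omega

private lemma off_add_le {u v : V} {p : G.Walk u v} {X Y : Set V} (q : TT G p X Y) :
    off q + q.1.2.2.length ≤ p.length := by
  obtain ⟨s, hs⟩ := off_spec q
  have h := congrArg List.length hs
  simp only [List.length_drop, List.length_append, List.length_tail,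
    Walk.length_support] at h
  omega

private lemma ends_mem {X Y : Set V} {a b : V} {q : G.Walk a b}
    (h : IsXYPath G X Y q ∨ IsXYPath G Y X q) : a ∈ X ∪ Y ∧ b ∈ X ∪ Y := by
  rcases h with ⟨_, h1, h2⟩ | ⟨_, h1, h2⟩
  · have ha : a ∈ walkVerts q ∩ X := by rw [h1]; rfl
    have hb : b ∈ walkVerts q ∩ Y := by rw [h2]; rfl
    exact ⟨Or.inl ha.2, Or.inr hb.2⟩
  · have ha : a ∈ walkVerts q ∩ Y := by rw [h1]; rfl
    have hb : b ∈ walkVerts q ∩ X := by rw [h2]; rfl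
    exact ⟨Or.inr ha.2, Or.inl hb.2⟩

private lemma interior_notMem {X Y : Set V} {a b : V} {q : G.Walk a b}
    (h : IsXYPath G X Y q ∨ IsXYPath G Y X q) {n : ℕ} (h0 : 0 < n) (hn : n < q.length)
    (w : V) (hw : q.support[n]? = some w) : w ∉ X ∪ Y := by
  intro hmem
  have hpath : q.IsPath := by rcases h with h | h <;> exact h.1
  have hnd : q.support.Nodup := hpath.support_nodup
  have hidx : ∀ (i j : ℕ) (x : V), q.support[i]? = some x → q.support[j]? = some x → i = j := by
    intro i j x hi hj
    obtain ⟨hi', rfl⟩ := List.getElem?_eq_some_iff.mp hi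
    obtain ⟨hj', hj2⟩ := List.getElem?_eq_some_iff.mp hj
    exact ((List.Nodup.getElem_inj_iff hnd).mp hj2).symm
  have hwq : w ∈ walkVerts q := by
    obtain ⟨hn', rfl⟩ := List.getElem?_eq_some_iff.mp hw
    exact List.getElem_mem hn'
  rcases hmem with hX | hY
  · rcases h with hq | hq
    · have : w = a := by
        have : w ∈ walkVerts q ∩ X := ⟨hwq, hX⟩
        rwa [hq.2.1] at this
      subst this
      exact absurd (hidx n 0 w hw (supp_zero q)) (by omega)
    · have : w = b := by
        have : w ∈ walkVerts q ∩ X := ⟨hwq, hX⟩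
        rwa [hq.2.2] at this
      subst this
      exact absurd (hidx n q.length w hw (supp_last q)) (by omega)
  · rcases h with hq | hq
    · have : w = b := by
        have : w ∈ walkVerts q ∩ Y := ⟨hwq, hY⟩
        rwa [hq.2.2] at this
      subst this
      exact absurd (hidx n q.length w hw (supp_last q)) (by omega)
    · have : w = a := by
        have : w ∈ walkVerts q ∩ Y := ⟨hwq, hY⟩
        rwa [hq.2.1] at this
      subst this
      exact absurd (hidx n 0 w hw (supp_zero q)) (by omega)

end Aux
private lemma key {V : Type} [Fintype V] (G : SimpleGraph V) {u v : V} (p : G.Walk u v)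
    (hp : p.IsPath) (X Y : Set V) (f : ℕ)
    (hf : ∀ (a b : V) (q : G.Walk a b), IsSubpath G q p →
      (IsXYPath G X Y q ∨ IsXYPath G Y X q) → f ≤ q.length) :
    (tCount G p X Y : ℤ) * ((f : ℤ) - 1) ≤ ((walkVerts p \ (X ∪ Y)).ncard : ℤ) := by
  classical
  set m := f - 1 with hm
  set D := walkVerts p \ (X ∪ Y) with hD
  have hsupl : p.support.length = p.length + 1 := Walk.length_support p
  have hflen : ∀ q : TT G p X Y, f ≤ q.1.2.2.length := fun q => hf _ _ _ q.2.1 q.2.2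
  -- index injectivity on p
  have hidx : ∀ (i j : ℕ) (x : V), p.support[i]? = some x → p.support[j]? = some x → i = j := by
    intro i j x hi hj
    obtain ⟨hi', rfl⟩ := List.getElem?_eq_some_iff.mp hi
    obtain ⟨hj', hj2⟩ := List.getElem?_eq_some_iff.mp hj
    exact ((List.Nodup.getElem_inj_iff hp.support_nodup).mp hj2).symm
  -- endpoints of subpaths sit at positions off and off + length
  have hend : ∀ q : TT G p X Y, p.support[off q]? = some q.1.1 ∧
      p.support[off q + q.1.2.2.length]? = some q.1.2.1 := by
    intro q
    constructor
    · have h := off_getElem q 0 (Nat.zero_le _)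
      rw [supp_zero] at h
      simpa using h
    · have h := off_getElem q q.1.2.2.length le_rfl
      rwa [supp_last] at h
  -- interior positions of a subpath avoid X ∪ Y
  have hint : ∀ (q : TT G p X Y) (n : ℕ) (w : V), off q < n → n < off q + q.1.2.2.length →
      p.support[n]? = some w → w ∉ X ∪ Y := by
    intro q n w h1 h2 h3
    have h4 := off_getElem q (n - off q) (by omega)
    rw [show off q + (n - off q) = n by omega, h3] at h4
    exact interior_notMem q.2.2 (by omega) (by omega) w h4.symm
  -- the injection
  set Ψ : TT G p X Y × Fin m → V := fun x => p.support.getD (off x.1 + 1 + x.2.val) u with hΨ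
  have hbound : ∀ (q : TT G p X Y) (k : Fin m), 0 < 1 + k.val ∧ 1 + k.val < q.1.2.2.length := by
    intro q k
    have h1 := hflen q
    have h2 := k.2
    constructor <;> omega
  have hval : ∀ (q : TT G p X Y) (k : Fin m),
      p.support[off q + 1 + k.val]? = some (Ψ (q, k)) := by
    intro q k
    have h2 := (hbound q k).2
    have h3 : 1 + k.val < q.1.2.2.support.length := by rw [Walk.length_support]; omega
    have h4 : p.support[off q + 1 + k.val]? = some (q.1.2.2.support[1 + k.val]'h3) := by
      rw [show off q + 1 + k.val = off q + (1 + k.val) by omega, off_getElem q _ (by omega),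
        List.getElem?_eq_getElem h3]
    rw [h4, hΨ]
    simp only [List.getD_eq_getElem?_getD, h4]
    rfl
  have hmemD : ∀ x : TT G p X Y × Fin m, Ψ x ∈ D := by
    rintro ⟨q, k⟩
    have h4 := hval q k
    have hb := hbound q k
    have hle := off_add_le q
    constructor
    · obtain ⟨hn', hg⟩ := List.getElem?_eq_some_iff.mp h4
      rw [← hg]
      exact List.getElem_mem hn'
    · exact hint q (off q + 1 + k.val) _ (by omega) (by omega) h4
  have hinj : Function.Injective (fun x : TT G p X Y × Fin m => (⟨Ψ x, hmemD x⟩ : D)) := by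
    rintro ⟨q, k⟩ ⟨q', k'⟩ hxy
    simp only [Subtype.mk.injEq] at hxy
    have h4 := hval q k
    have h4' := hval q' k'
    rw [hxy] at h4
    have hn : off q + 1 + k.val = off q' + 1 + k'.val := hidx _ _ _ h4 h4'
    have hbq := hbound q k
    have hbq' := hbound q' k'
    -- equal offsets
    have hoff : off q = off q' := by
      by_contra hne
      rcases Nat.lt_or_ge (off q) (off q') with hlt | hge
      · exact hint q (off q') _ hlt (by omega) (hend q').1 (ends_mem q'.2.2).1
      · exact hint q' (off q) _ (by omega) (by omega) (hend q).1 (ends_mem q.2.2).1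
    -- equal lengths
    have hlen : q.1.2.2.length = q'.1.2.2.length := by
      by_contra hne
      rcases Nat.lt_or_ge q.1.2.2.length q'.1.2.2.length with hlt | hge
      · exact hint q' (off q + q.1.2.2.length) _ (by omega) (by omega)
          (hend q).2 (ends_mem q.2.2).2
      · exact hint q (off q' + q'.1.2.2.length) _ (by omega) (by omega)
          (hend q').2 (ends_mem q'.2.2).2
    -- equal values of k
    have hk : k = k' := Fin.ext (by omega)
    subst hk
    -- endpoints are equal
    obtain ⟨ha, hb⟩ := hend q
    obtain ⟨ha', hb'⟩ := hend q'
    rw [hoff] at ha hb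
    rw [← hlen] at hb'
    have hA : q.1.1 = q'.1.1 := Option.some.inj ((ha.symm.trans ha'))
    have hB : q.1.2.1 = q'.1.2.1 := Option.some.inj ((hb.symm.trans hb'))
    -- walks are equal
    obtain ⟨r, s, hr, hs⟩ := off_dec q
    obtain ⟨r', s', hr', hs'⟩ := off_dec q'
    suffices hqq : q = q' by rw [hqq]
    obtain ⟨⟨a, b, w⟩, hw⟩ := q
    obtain ⟨⟨a', b', w'⟩, hw'⟩ := q'
    simp only at hA hB ha hb ha' hb' hr hr' hs hs' hlen r s r' s'
    subst hA
    subst hB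
    obtain ⟨-, -, happ⟩ := walk_append_inj r r' (w.append s) (w'.append s')
      (by rw [hr, hr', hoff]) (hs.symm.trans hs')
    obtain ⟨-, hww, -⟩ := walk_append_inj w w' s s' hlen (eq_of_heq happ)
    have : w = w' := eq_of_heq hww
    subst this
    rfl
  -- counting
  have hcard : Nat.card (TT G p X Y × Fin m) ≤ Nat.card D :=
    Nat.card_le_card_of_injective _ hinj
  rw [Nat.card_prod] at hcard
  have hfin : Nat.card (Fin m) = m := by simp
  have hDcard : Nat.card D = D.ncard := Nat.card_coe_set_eq D
  have htc : tCount G p X Y = Nat.card (TT G p X Y) := rfl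
  have hnat : tCount G p X Y * m ≤ D.ncard := by
    rw [htc, ← hfin, ← hDcard]
    exact hcard
  have h1 : (f : ℤ) - 1 ≤ (m : ℤ) := by omega
  calc (tCount G p X Y : ℤ) * ((f : ℤ) - 1)
      ≤ (tCount G p X Y : ℤ) * (m : ℤ) :=
        mul_le_mul_of_nonneg_left h1 (by positivity)
    _ ≤ (D.ncard : ℤ) := by exact_mod_cast hnat
private lemma distToSet_eq_zero {V : Type} (G : SimpleGraph V) {v : V} {U : Set V}
    (h : v ∈ U) : distToSet G v U = 0 :=
  Nat.le_zero.mp (Nat.sInf_le ⟨v, h, SimpleGraph.dist_self⟩)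

private lemma distToSet_le {V : Type} (G : SimpleGraph V) {v b : V} {U : Set V}
    (h : b ∈ U) : distToSet G v U ≤ G.dist v b :=
  Nat.sInf_le ⟨b, h, rfl⟩

private lemma subpath_subset {V : Type} {G : SimpleGraph V} {a b u v : V}
    {q : G.Walk a b} {p : G.Walk u v} (h : IsSubpath G q p) {x : V}
    (hx : x ∈ walkVerts q) : x ∈ walkVerts p := by
  obtain ⟨r, s, hs⟩ := h
  have : x ∈ p.support := by
    rw [hs, Walk.mem_support_append_iff, Walk.mem_support_append_iff]
    exact Or.inr (Or.inl hx)
  exact this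

private lemma key' {V : Type} [Fintype V] (G : SimpleGraph V) {u v : V} (p : G.Walk u v)
    (hp : p.IsPath) (W X Y : Set V) (hW : ∀ x ∈ walkVerts p, x ∈ W) (f : ℕ)
    (hfv : ∀ w : V, f ≤ distToSet G w W + distToSet G w X + distToSet G w Y) :
    (tCount G p X Y : ℤ) * ((f : ℤ) - 1) ≤ ((walkVerts p \ (X ∪ Y)).ncard : ℤ) := by
  apply key G p hp X Y f
  intro a b q hsub hxy
  have hap : a ∈ walkVerts p := subpath_subset hsub (Walk.start_mem_support q)
  have haW : distToSet G a W = 0 := distToSet_eq_zero G (hW a hap)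
  have hd := hfv a
  have hdist : G.dist a b ≤ q.length := SimpleGraph.dist_le q
  rcases hxy with h | h
  · have ha : a ∈ X := by
      have : a ∈ walkVerts q ∩ X := by rw [h.2.1]; rfl
      exact this.2
    have hb : b ∈ Y := by
      have : b ∈ walkVerts q ∩ Y := by rw [h.2.2]; rfl
      exact this.2
    have h1 : distToSet G a X = 0 := distToSet_eq_zero G ha
    have h2 : distToSet G a Y ≤ q.length := le_trans (distToSet_le G hb) hdist
    omega
  · have ha : a ∈ Y := by
      have : a ∈ walkVerts q ∩ Y := by rw [h.2.1]; rfl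
      exact this.2
    have hb : b ∈ X := by
      have : b ∈ walkVerts q ∩ X := by rw [h.2.2]; rfl
      exact this.2
    have h1 : distToSet G a Y = 0 := distToSet_eq_zero G ha
    have h2 : distToSet G a X ≤ q.length := le_trans (distToSet_le G hb) hdist
    omega
/-- For each path `P` in a set `P` of three longest paths of a finite connected graph,
`|X_P(P)| ≥ t_P(P) · (f(G, P) − 1)`. -/
theorem X_card_lower_bound {V : Type} [Fintype V] (G : SimpleGraph V) (hG : G.Connected)
    {u₁ v₁ u₂ v₂ u₃ v₃ : V} (p₁ : G.Walk u₁ v₁) (p₂ : G.Walk u₂ v₂) (p₃ : G.Walk u₃ v₃)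
    (h₁ : IsLongestPath G p₁) (h₂ : IsLongestPath G p₂) (h₃ : IsLongestPath G p₃)
    (hne₁₂ : pathSigma G p₁ ≠ pathSigma G p₂)
    (hne₁₃ : pathSigma G p₁ ≠ pathSigma G p₃)
    (hne₂₃ : pathSigma G p₂ ≠ pathSigma G p₃) :
    ((walkVerts p₁ \ (walkVerts p₂ ∪ walkVerts p₃)).ncard : ℤ) ≥
        (tCount G p₁ (walkVerts p₂) (walkVerts p₃) : ℤ) * ((fThree G p₁ p₂ p₃ : ℤ) - 1) ∧
    ((walkVerts p₂ \ (walkVerts p₁ ∪ walkVerts p₃)).ncard : ℤ) ≥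
        (tCount G p₂ (walkVerts p₁) (walkVerts p₃) : ℤ) * ((fThree G p₁ p₂ p₃ : ℤ) - 1) ∧
    ((walkVerts p₃ \ (walkVerts p₁ ∪ walkVerts p₂)).ncard : ℤ) ≥
        (tCount G p₃ (walkVerts p₁) (walkVerts p₂) : ℤ) * ((fThree G p₁ p₂ p₃ : ℤ) - 1) := by
  refine ⟨?_, ?_, ?_⟩
  · exact key' G p₁ h₁.1 (walkVerts p₁) (walkVerts p₂) (walkVerts p₃) (fun x hx => hx)
      (fThree G p₁ p₂ p₃) (fun w => Nat.sInf_le ⟨w, rfl⟩)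
  · refine key' G p₂ h₂.1 (walkVerts p₂) (walkVerts p₁) (walkVerts p₃) (fun x hx => hx)
      (fThree G p₁ p₂ p₃) (fun w => ?_)
    have h : fThree G p₁ p₂ p₃ ≤ distToSet G w (walkVerts p₁) + distToSet G w (walkVerts p₂) +
        distToSet G w (walkVerts p₃) := Nat.sInf_le ⟨w, rfl⟩
    omega
  · refine key' G p₃ h₃.1 (walkVerts p₃) (walkVerts p₁) (walkVerts p₂) (fun x hx => hx)
      (fThree G p₁ p₂ p₃) (fun w => ?_)
    have h : fThree G p₁ p₂ p₃ ≤ distToSet G w (walkVerts p₁) + distToSet G w (walkVerts p₂) +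
        distToSet G w (walkVerts p₃) := Nat.sInf_le ⟨w, rfl⟩
    omega
end
end

section
/- Let G be a finite connected graph, and let P be a set of three longest paths of G. If there exists a path P ∈ P with t_P(P) = 1 (i.e., writing P \ {P} = {P₁,P₂}, the path P contains exactly one V(P₁)-V(P₂) subpath), then f(G,P) = 0. -/
open SimpleGraph

noncomputable section

namespace LPAux

open SimpleGraph Walk

variable {V : Type} {G : SimpleGraph V}

lemma junction {x y z : V} {w1 : G.Walk x y} {w2 : G.Walk y z}
    (h : (w1.append w2).IsPath) {c : V} (h1 : c ∈ w1.support) (h2 : c ∈ w2.support) : c = y := by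
  by_contra hc
  rw [Walk.isPath_def, Walk.support_append] at h
  have hdisj := List.disjoint_of_nodup_append h
  have h2' : c ∈ w2.support.tail := by
    rw [w2.support_eq_cons] at h2
    rcases List.mem_cons.mp h2 with h' | h'
    · exact absurd h' hc
    · exact h'
  exact hdisj h1 h2'

lemma append_isPath {x y z : V} {w1 : G.Walk x y} {w2 : G.Walk y z}
    (h1 : w1.IsPath) (h2 : w2.IsPath)
    (hd : ∀ c, c ∈ w1.support → c ∈ w2.support → c = y) : (w1.append w2).IsPath := by
  rw [Walk.isPath_def, Walk.support_append]
  have hn2 := h2.support_nodup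
  rw [w2.support_eq_cons] at hn2
  refine List.Nodup.append h1.support_nodup (List.nodup_cons.mp hn2).2 ?_
  intro c hc1 hc2
  have hcs : c ∈ w2.support := by
    rw [w2.support_eq_cons]; exact List.mem_cons_of_mem _ hc2
  have hcy := hd c hc1 hcs
  subst hcy
  exact (List.nodup_cons.mp hn2).1 hc2

lemma exists_first (X : Set V) : ∀ {c a : V} (w : G.Walk c a), a ∈ X →
    ∃ (a' : V) (w₁ : G.Walk c a') (w₂ : G.Walk a' a), w = w₁.append w₂ ∧ a' ∈ X ∧
      ∀ z ∈ w₁.support, z ∈ X → z = a' := by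
  intro c a w
  induction w with
  | nil =>
    intro ha
    refine ⟨_, Walk.nil, Walk.nil, rfl, ha, ?_⟩
    intro z hz _
    simpa using hz
  | @cons c d a h w ih =>
    intro ha
    by_cases hc : c ∈ X
    · refine ⟨c, Walk.nil, Walk.cons h w, rfl, hc, ?_⟩
      intro z hz _
      simpa using hz
    · obtain ⟨a', w₁, w₂, hw, ha', hall⟩ := ih ha
      refine ⟨a', Walk.cons h w₁, w₂, by rw [Walk.cons_append, hw], ha', ?_⟩
      intro z hz hzX
      rw [Walk.support_cons] at hz
      rcases List.mem_cons.mp hz with rfl | hz'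
      · exact absurd hzX hc
      · exact hall z hz' hzX

lemma exists_xy (X Y : Set V) {c a : V} (w : G.Walk c a) (hc : c ∈ Y) (ha : a ∈ X) :
    ∃ (c' a' : V) (q' : G.Walk c' a') (u₁ : G.Walk c c') (u₂ : G.Walk a' a),
      w = u₁.append (q'.append u₂) ∧ c' ∈ Y ∧ a' ∈ X ∧
      (∀ z ∈ q'.support, z ∈ X → z = a') ∧ (∀ z ∈ q'.support, z ∈ Y → z = c') := by
  obtain ⟨a', w₁, w₂, hw, ha', hX⟩ := exists_first (G := G) X w ha
  obtain ⟨c', v₁, v₂, hv, hc', hY⟩ := exists_first (G := G) Y w₁.reverse hc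
  have hw₁ : w₁ = v₂.reverse.append v₁.reverse := by
    rw [← Walk.reverse_append, ← hv, Walk.reverse_reverse]
  have hmemq' : ∀ z ∈ v₁.reverse.support, z ∈ w₁.support := by
    intro z hz
    rw [Walk.support_reverse, List.mem_reverse] at hz
    have : z ∈ (v₁.append v₂).support := Walk.subset_support_append_left _ _ hz
    rw [← hv, Walk.support_reverse, List.mem_reverse] at this
    exact this
  refine ⟨c', a', v₁.reverse, v₂.reverse, w₂, ?_, hc', ha', ?_, ?_⟩
  · rw [hw, hw₁]
    exact (Walk.append_assoc _ _ _).symm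
  · intro z hz hzX
    exact hX z (hmemq' z hz) hzX
  · intro z hz hzY
    rw [Walk.support_reverse, List.mem_reverse] at hz
    exact hY z hz hzY

lemma isSubpath_trans {a b x y u v : V} {q : G.Walk a b} {w : G.Walk x y} {p : G.Walk u v}
    (h1 : IsSubpath G q w) (h2 : IsSubpath G w p) : IsSubpath G q p := by
  obtain ⟨r1, s1, rfl⟩ := h1
  obtain ⟨r2, s2, rfl⟩ := h2
  exact ⟨r2.append r1, s1.append s2, by simp [Walk.append_assoc]⟩

lemma mem_walkVerts {u v z : V} {w : G.Walk u v} : z ∈ walkVerts w ↔ z ∈ w.support := Iff.rfl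

lemma core {L : ℕ} (hmax : ∀ (x y : V) (w : G.Walk x y), w.IsPath → w.length ≤ L)
    {u v uA vA uB vB a b : V} {p : G.Walk u v} {pA : G.Walk uA vA} {pB : G.Walk uB vB}
    (hp : p.IsPath) (hpL : p.length = L)
    (hApath : pA.IsPath) (hAL : pA.length = L) (hBpath : pB.IsPath) (hBL : pB.length = L)
    {q : G.Walk a b} {r : G.Walk u a} {s : G.Walk b v} (hdec : p = r.append (q.append s))
    (hqX : walkVerts q ∩ walkVerts pA = {a}) (hqY : walkVerts q ∩ walkVerts pB = {b})
    (huniq : ∀ (a' b' : V) (q' : G.Walk a' b'), IsSubpath G q' p →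
      (IsXYPath G (walkVerts pA) (walkVerts pB) q' ∨ IsXYPath G (walkVerts pB) (walkVerts pA) q') →
      a' = a ∧ b' = b) :
    a = b := by
  classical
  -- basic membership facts
  have haA : a ∈ walkVerts pA := by
    have h := Set.mem_singleton a
    rw [← hqX] at h
    exact h.2
  have hbB : b ∈ walkVerts pB := by
    have h := Set.mem_singleton b
    rw [← hqY] at h
    exact h.2
  have hqXall : ∀ z ∈ q.support, z ∈ walkVerts pA → z = a := by
    intro z hz hzA
    have : z ∈ walkVerts q ∩ walkVerts pA := ⟨hz, hzA⟩
    rw [hqX] at this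
    exact this
  have hqYall : ∀ z ∈ q.support, z ∈ walkVerts pB → z = b := by
    intro z hz hzB
    have : z ∈ walkVerts q ∩ walkVerts pB := ⟨hz, hzB⟩
    rw [hqY] at this
    exact this
  -- path pieces
  have hp1 := hp
  rw [hdec] at hp1
  have hrpath : r.IsPath := hp1.of_append_left
  have hqspath : (q.append s).IsPath := hp1.of_append_right
  have hqpath : q.IsPath := hqspath.of_append_left
  have hspath : s.IsPath := hqspath.of_append_right
  have hdec2 : p = (r.append q).append s := by rw [hdec, Walk.append_assoc]
  have hp2 := hp
  rw [hdec2] at hp2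
  have hrqpath : (r.append q).IsPath := hp2.of_append_left
  by_contra hab
  -- no vertex of pB on r
  have hrB : ∀ z ∈ r.support, z ∉ walkVerts pB := by
    intro c hcr hcB
    set w := r.dropUntil c hcr with hwdef
    have hwpath : w.IsPath := hrpath.dropUntil hcr
    obtain ⟨c', a', q', u₁, u₂, hweq, hc', ha', hXf, hYf⟩ :=
      exists_xy (walkVerts pA) (walkVerts pB) w hcB haA
    have hq'path : q'.IsPath := by
      have := hwpath
      rw [hweq] at this
      exact this.of_append_right.of_append_left
    have hsub1 : IsSubpath G q' w := ⟨u₁, u₂, hweq⟩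
    have hsub2 : IsSubpath G w r :=
      ⟨r.takeUntil c hcr, Walk.nil, by rw [Walk.append_nil, hwdef]; exact (r.take_spec hcr).symm⟩
    have hsub3 : IsSubpath G r p := ⟨Walk.nil, q.append s, by rw [Walk.nil_append]; exact hdec⟩
    have hsub : IsSubpath G q' p := isSubpath_trans hsub1 (isSubpath_trans hsub2 hsub3)
    have hxy : IsXYPath G (walkVerts pB) (walkVerts pA) q' := by
      refine ⟨hq'path, ?_, ?_⟩
      · ext z
        constructor
        · rintro ⟨hz1, hz2⟩
          exact hYf z hz1 hz2
        · rintro rfl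
          exact ⟨q'.start_mem_support, hc'⟩
      · ext z
        constructor
        · rintro ⟨hz1, hz2⟩
          exact hXf z hz1 hz2
        · rintro rfl
          exact ⟨q'.end_mem_support, ha'⟩
    obtain ⟨hc'a, ha'b⟩ := huniq c' a' q' hsub (Or.inr hxy)
    -- a' = b, but a' lies on r : contradiction since b is on q
    have ha'r : a' ∈ r.support := by
      apply Walk.support_dropUntil_subset r hcr
      rw [← hwdef, hweq]
      apply Walk.subset_support_append_right
      exact Walk.subset_support_append_left _ _ q'.end_mem_support
    have hbqs : (b : V) ∈ (q.append s).support :=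
      Walk.subset_support_append_left _ _ q.end_mem_support
    have : b = a := junction hp1 (ha'b ▸ ha'r) hbqs
    exact hab this.symm
  -- no vertex of pA on s
  have hsA : ∀ z ∈ s.support, z ∉ walkVerts pA := by
    intro c hcs hcA
    set w := s.takeUntil c hcs with hwdef
    have hwpath : w.IsPath := hspath.takeUntil hcs
    obtain ⟨c', a', q', u₁, u₂, hweq, hc', ha', hXf, hYf⟩ :=
      exists_xy (walkVerts pA) (walkVerts pB) w hbB hcA
    have hq'path : q'.IsPath := by
      have := hwpath
      rw [hweq] at this
      exact this.of_append_right.of_append_left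
    have hsub1 : IsSubpath G q' w := ⟨u₁, u₂, hweq⟩
    have hsub2 : IsSubpath G w s :=
      ⟨Walk.nil, s.dropUntil c hcs, by rw [Walk.nil_append, hwdef]; exact (s.take_spec hcs).symm⟩
    have hsub3 : IsSubpath G s p := ⟨r.append q, Walk.nil, by rw [Walk.append_nil]; exact hdec2⟩
    have hsub : IsSubpath G q' p := isSubpath_trans hsub1 (isSubpath_trans hsub2 hsub3)
    have hxy : IsXYPath G (walkVerts pB) (walkVerts pA) q' := by
      refine ⟨hq'path, ?_, ?_⟩
      · ext z
        constructor
        · rintro ⟨hz1, hz2⟩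
          exact hYf z hz1 hz2
        · rintro rfl
          exact ⟨q'.start_mem_support, hc'⟩
      · ext z
        constructor
        · rintro ⟨hz1, hz2⟩
          exact hXf z hz1 hz2
        · rintro rfl
          exact ⟨q'.end_mem_support, ha'⟩
    obtain ⟨hc'a, ha'b⟩ := huniq c' a' q' hsub (Or.inr hxy)
    -- c' = a, but c' lies on s : contradiction
    have hc's : c' ∈ s.support := by
      apply Walk.support_takeUntil_subset s hcs
      rw [← hwdef, hweq]
      exact Walk.subset_support_append_right _ _
        (Walk.subset_support_append_left _ _ q'.start_mem_support)
    have harq : (a : V) ∈ (r.append q).support :=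
      Walk.subset_support_append_right _ _ q.start_mem_support
    exact hab (junction hp2 harq (hc'a ▸ hc's))
  -- length bounds via pA
  have haSup : a ∈ pA.support := haA
  have hA12 : (pA.takeUntil a haSup).length + (pA.dropUntil a haSup).length = L := by
    have h := congrArg Walk.length (pA.take_spec haSup)
    rw [Walk.length_append] at h
    rw [h, hAL]
  have hqsX : ∀ z ∈ (q.append s).support, z ∈ walkVerts pA → z = a := by
    intro z hz hzA
    rcases (Walk.mem_support_append_iff _ _).mp hz with hz' | hz'
    · exact hqXall z hz' hzA
    · exact absurd hzA (hsA z hz')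
  have bound1 : (pA.takeUntil a haSup).length + (q.length + s.length) ≤ L := by
    have hW : ((pA.takeUntil a haSup).append (q.append s)).IsPath := by
      apply append_isPath (hApath.takeUntil haSup) hqspath
      intro c hc1 hc2
      exact hqsX c hc2 (Walk.support_takeUntil_subset pA haSup hc1)
    have h := hmax _ _ _ hW
    rwa [Walk.length_append, Walk.length_append] at h
  have bound2 : (pA.dropUntil a haSup).length + (q.length + s.length) ≤ L := by
    have hW : ((pA.dropUntil a haSup).reverse.append (q.append s)).IsPath := by
      apply append_isPath (hApath.dropUntil haSup).reverse hqspath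
      intro c hc1 hc2
      rw [Walk.support_reverse, List.mem_reverse] at hc1
      exact hqsX c hc2 (Walk.support_dropUntil_subset pA haSup hc1)
    have h := hmax _ _ _ hW
    rwa [Walk.length_append, Walk.length_append, Walk.length_reverse] at h
  -- length bounds via pB
  have hbSup : b ∈ pB.support := hbB
  have hB12 : (pB.takeUntil b hbSup).length + (pB.dropUntil b hbSup).length = L := by
    have h := congrArg Walk.length (pB.take_spec hbSup)
    rw [Walk.length_append] at h
    rw [h, hBL]
  have hrqY : ∀ z ∈ (r.append q).support, z ∈ walkVerts pB → z = b := by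
    intro z hz hzB
    rcases (Walk.mem_support_append_iff _ _).mp hz with hz' | hz'
    · exact absurd hzB (hrB z hz')
    · exact hqYall z hz' hzB
  have bound3 : (r.length + q.length) + (pB.dropUntil b hbSup).length ≤ L := by
    have hW : ((r.append q).append (pB.dropUntil b hbSup)).IsPath := by
      apply append_isPath hrqpath (hBpath.dropUntil hbSup)
      intro c hc1 hc2
      exact hrqY c hc1 (Walk.support_dropUntil_subset pB hbSup hc2)
    have h := hmax _ _ _ hW
    rwa [Walk.length_append, Walk.length_append] at h
  have bound4 : (r.length + q.length) + (pB.takeUntil b hbSup).length ≤ L := by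
    have hW : ((r.append q).append (pB.takeUntil b hbSup).reverse).IsPath := by
      apply append_isPath hrqpath (hBpath.takeUntil hbSup).reverse
      intro c hc1 hc2
      rw [Walk.support_reverse, List.mem_reverse] at hc2
      exact hrqY c hc1 (Walk.support_takeUntil_subset pB hbSup hc2)
    have h := hmax _ _ _ hW
    rwa [Walk.length_append, Walk.length_append, Walk.length_reverse] at h
  have hpL2 : r.length + (q.length + s.length) = L := by
    have h := congrArg Walk.length hdec
    rw [Walk.length_append, Walk.length_append] at h
    rw [← h, ← hpL]
  have hq0 : q.length = 0 := by omega
  exact hab (Walk.eq_of_length_eq_zero hq0)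

lemma exists_common [Fintype V] {u v uA vA uB vB : V}
    {p : G.Walk u v} {pA : G.Walk uA vA} {pB : G.Walk uB vB}
    (hp : IsLongestPath G p) (hA : IsLongestPath G pA) (hB : IsLongestPath G pB)
    (ht : tCount G p (walkVerts pA) (walkVerts pB) = 1) :
    ∃ w : V, w ∈ p.support ∧ w ∈ pA.support ∧ w ∈ pB.support := by
  classical
  have hmax : ∀ (x y : V) (w : G.Walk x y), w.IsPath → w.length ≤ maxPathLength G := by
    intro x y w hw
    apply le_csSup
    · refine ⟨Fintype.card V, ?_⟩
      rintro n ⟨x', y', q, hq, hl⟩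
      exact hl ▸ hq.length_lt.le
    · exact ⟨x, y, w, hw, rfl⟩
  rw [tCount, Nat.card_eq_one_iff_exists] at ht
  obtain ⟨⟨⟨a, b, q⟩, hsub, hor⟩, huniq⟩ := ht
  have huniq' : ∀ (a' b' : V) (q' : G.Walk a' b'), IsSubpath G q' p →
      (IsXYPath G (walkVerts pA) (walkVerts pB) q' ∨
        IsXYPath G (walkVerts pB) (walkVerts pA) q') →
      a' = a ∧ b' = b := by
    intro a' b' q' h1 h2
    have h := huniq ⟨⟨a', b', q'⟩, h1, h2⟩
    have hval : (⟨a', b', q'⟩ : Σ x : V, Σ y : V, G.Walk x y) = ⟨a, b, q⟩ :=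
      congrArg Subtype.val h
    exact ⟨congrArg Sigma.fst hval, congrArg (fun z => z.2.1) hval⟩
  obtain ⟨r, s, hdec⟩ := hsub
  have hap : a ∈ p.support := by
    rw [hdec]
    exact Walk.subset_support_append_left _ _ r.end_mem_support
  rcases hor with hxy | hyx
  · have hab : a = b := core hmax hp.1 hp.2 hA.1 hA.2 hB.1 hB.2 hdec hxy.2.1 hxy.2.2 huniq'
    have haA : a ∈ walkVerts pA := by
      have h := Set.mem_singleton a
      rw [← hxy.2.1] at h
      exact h.2
    have hbB : b ∈ walkVerts pB := by
      have h := Set.mem_singleton b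
      rw [← hxy.2.2] at h
      exact h.2
    exact ⟨a, hap, haA, hab ▸ hbB⟩
  · have hab : a = b := core hmax hp.1 hp.2 hB.1 hB.2 hA.1 hA.2 hdec hyx.2.1 hyx.2.2
      (fun a' b' q' h1 h2 => huniq' a' b' q' h1 h2.symm)
    have haB : a ∈ walkVerts pB := by
      have h := Set.mem_singleton a
      rw [← hyx.2.1] at h
      exact h.2
    have hbA : b ∈ walkVerts pA := by
      have h := Set.mem_singleton b
      rw [← hyx.2.2] at h
      exact h.2
    exact ⟨a, hap, hab ▸ hbA, haB⟩

lemma distToSet_eq_zero {w : V} {U : Set V} (hw : w ∈ U) : distToSet G w U = 0 :=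
  Nat.sInf_eq_zero.mpr (Or.inl ⟨w, hw, SimpleGraph.dist_self⟩)

end LPAux

/-- If some path `P` in a set `P` of three longest paths of a finite connected graph
satisfies `t_P(P) = 1`, then `f(G, P) = 0`. -/
theorem fThree_eq_zero_of_tCount_eq_one {V : Type} [Fintype V] (G : SimpleGraph V)
    (hG : G.Connected)
    {u₁ v₁ u₂ v₂ u₃ v₃ : V} (p₁ : G.Walk u₁ v₁) (p₂ : G.Walk u₂ v₂) (p₃ : G.Walk u₃ v₃)
    (h₁ : IsLongestPath G p₁) (h₂ : IsLongestPath G p₂) (h₃ : IsLongestPath G p₃)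
    (hne₁₂ : pathSigma G p₁ ≠ pathSigma G p₂)
    (hne₁₃ : pathSigma G p₁ ≠ pathSigma G p₃)
    (hne₂₃ : pathSigma G p₂ ≠ pathSigma G p₃)
    (ht : tCount G p₁ (walkVerts p₂) (walkVerts p₃) = 1 ∨
          tCount G p₂ (walkVerts p₁) (walkVerts p₃) = 1 ∨
          tCount G p₃ (walkVerts p₁) (walkVerts p₂) = 1) :
    fThree G p₁ p₂ p₃ = 0 := by
  have hcommon : ∃ w : V, w ∈ p₁.support ∧ w ∈ p₂.support ∧ w ∈ p₃.support := by
    rcases ht with h | h | h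
    · exact LPAux.exists_common h₁ h₂ h₃ h
    · obtain ⟨w, hw2, hw1, hw3⟩ := LPAux.exists_common h₂ h₁ h₃ h
      exact ⟨w, hw1, hw2, hw3⟩
    · obtain ⟨w, hw3, hw1, hw2⟩ := LPAux.exists_common h₃ h₁ h₂ h
      exact ⟨w, hw1, hw2, hw3⟩
  obtain ⟨w, hw1, hw2, hw3⟩ := hcommon
  have hzero : distToSet G w (walkVerts p₁) + distToSet G w (walkVerts p₂) +
      distToSet G w (walkVerts p₃) = 0 := by
    rw [LPAux.distToSet_eq_zero (show w ∈ walkVerts p₁ from hw1),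
      LPAux.distToSet_eq_zero (show w ∈ walkVerts p₂ from hw2),
      LPAux.distToSet_eq_zero (show w ∈ walkVerts p₃ from hw3)]
  exact Nat.sInf_eq_zero.mpr (Or.inl ⟨w, hzero⟩)
end
end

section
/- Let G be a finite connected graph and let P be a set of three longest paths of G. Then l(G) ≥ 6·f(G,P) − 2. -/
open SimpleGraph

noncomputable section

open SimpleGraph.Walk


section Aux

variable {V : Type} {G : SimpleGraph V}

/-- Appending two paths that share only the junction vertex yields a path. -/
lemma aux_append_isPath {a b c : V} {p : G.Walk a b} {q : G.Walk b c}
    (hp : p.IsPath) (hq : q.IsPath) (h : ∀ y ∈ p.support, y ∈ q.support → y = b) :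
    (p.append q).IsPath := by
  rw [Walk.isPath_def, Walk.support_append]
  refine List.Nodup.append hp.support_nodup ?_ ?_
  · have h2 := hq.support_nodup
    rw [q.support_eq_cons] at h2
    exact h2.of_cons
  · intro y hy hy'
    have hbt : b ∉ q.support.tail := by
      have h2 := hq.support_nodup
      rw [q.support_eq_cons] at h2
      exact (List.nodup_cons.mp h2).1
    have hyq : y ∈ q.support := by
      rw [q.support_eq_cons]; exact List.mem_cons_of_mem _ hy'
    exact hbt ((h y hy hyq) ▸ hy')

/-- In a path `p.append q`, a vertex in both pieces is the junction. -/
lemma aux_eq_junction {a b c : V} {p : G.Walk a b} {q : G.Walk b c}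
    (h : (p.append q).IsPath) : ∀ y ∈ p.support, y ∈ q.support → y = b := by
  intro y hy hyq
  by_contra hne
  have hnd := h.support_nodup
  rw [Walk.support_append] at hnd
  have hyt : y ∈ q.support.tail := by
    rw [q.support_eq_cons] at hyq
    rcases List.mem_cons.mp hyq with h' | h'
    · exact absurd h' hne
    · exact h'
  exact (List.disjoint_of_nodup_append hnd) hy hyt

lemma aux_length_le_max [Fintype V] {a b : V} {q : G.Walk a b} (hq : q.IsPath) :
    q.length ≤ maxPathLength G := by
  apply le_csSup
  · refine ⟨Fintype.card V, ?_⟩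
    rintro n ⟨x, y, r, hr, rfl⟩
    exact le_of_lt hr.length_lt
  · exact ⟨a, b, q, hq, rfl⟩

lemma aux_distToSet_le {v u : V} {U : Set V} (hu : u ∈ U) : distToSet G v U ≤ G.dist v u :=
  Nat.sInf_le ⟨u, hu, rfl⟩

lemma aux_distToSet_eq_zero {v : V} {U : Set V} (hv : v ∈ U) : distToSet G v U = 0 :=
  Nat.le_antisymm (by simpa [SimpleGraph.dist_self] using aux_distToSet_le (G := G) (v := v) hv)
    (Nat.zero_le _)

/-- First vertex of a walk lying in a set `T`, with the clean prefix walk. -/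
lemma aux_first_hit {a b : V} (W : G.Walk a b) (T : Set V) (hb : b ∈ T) :
    ∃ (c : V) (S : G.Walk a c), c ∈ T ∧ (∀ y ∈ S.support, y ∈ W.support) ∧
      (∀ y ∈ S.support, y ∈ T → y = c) := by
  induction W with
  | nil =>
    rename_i u
    exact ⟨u, Walk.nil, hb, by simp, by simp⟩
  | cons h W ih =>
    rename_i u x v
    by_cases hu : u ∈ T
    · refine ⟨u, Walk.nil, hu, by simp, ?_⟩
      intro y hy _
      simpa using hy
    · obtain ⟨c, S, hc, hsub, hclean⟩ := ih hb
      refine ⟨c, Walk.cons h S, hc, ?_, ?_⟩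
      · intro y hy
        rw [Walk.support_cons] at hy ⊢
        rcases List.mem_cons.mp hy with h' | h'
        · exact h' ▸ List.mem_cons_self
        · exact List.mem_cons_of_mem _ (hsub y h')
      · intro y hy hyT
        rw [Walk.support_cons] at hy
        rcases List.mem_cons.mp hy with h' | h'
        · exact absurd (h' ▸ hyT) hu
        · exact hclean y h' hyT

/-- A walk between two vertices of a path, staying in its support. -/
lemma aux_walk_in_support {u v a b : V} (P : G.Walk u v)
    (ha : a ∈ P.support) (hb : b ∈ P.support) :
    ∃ W : G.Walk a b, ∀ y ∈ W.support, y ∈ P.support := by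
  classical
  have hsplit : a ∈ (P.takeUntil b hb).support ∨ a ∈ (P.dropUntil b hb).support := by
    rw [← take_spec P hb, Walk.mem_support_append_iff] at ha
    exact ha
  rcases hsplit with h | h
  · exact ⟨(P.takeUntil b hb).dropUntil a h, fun y hy =>
      support_takeUntil_subset _ _ (support_dropUntil_subset _ _ hy)⟩
  · refine ⟨((P.dropUntil b hb).takeUntil a h).reverse, fun y hy => ?_⟩
    rw [Walk.support_reverse, List.mem_reverse] at hy
    exact support_dropUntil_subset _ _ (support_takeUntil_subset _ _ hy)

/-- Removing the last vertex of a nontrivial path. -/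
lemma aux_dropLast {a b : V} {p : G.Walk a b} (hp : p.IsPath) (hab : a ≠ b) :
    ∃ (b' : V) (q : G.Walk a b'), q.IsPath ∧ q.length + 1 = p.length ∧
      (∀ y ∈ q.support, y ∈ p.support) ∧ b ∉ q.support := by
  obtain ⟨w, h, r, hr⟩ := Walk.exists_eq_cons_of_ne hab.symm p.reverse
  have hrp : p.reverse.IsPath := hp.reverse
  rw [hr] at hrp
  refine ⟨w, r.reverse, (hrp.of_cons).reverse, ?_, ?_, ?_⟩
  · have : p.reverse.length = r.length + 1 := by rw [hr]; simp
    rw [Walk.length_reverse] at this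
    rw [Walk.length_reverse]; omega
  · intro y hy
    rw [Walk.support_reverse, List.mem_reverse] at hy
    have : y ∈ p.reverse.support := by
      rw [hr, Walk.support_cons]; exact List.mem_cons_of_mem _ hy
    rw [Walk.support_reverse, List.mem_reverse] at this
    exact this
  · intro hbq
    rw [Walk.support_reverse, List.mem_reverse] at hbq
    exact ((Walk.cons_isPath_iff _ _).mp hrp).2 hbq

end Aux
section Core

variable {V : Type} {G : SimpleGraph V}

/-- Big arm of a path at a vertex: a subpath from `p` to an end with at least half the length. -/
lemma aux_big_arm {a b p : V} {P : G.Walk a b} (hP : P.IsPath) (hp : p ∈ P.support) :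
    ∃ (e : V) (A : G.Walk e p), A.IsPath ∧ P.length ≤ 2 * A.length ∧
      ∀ y ∈ A.support, y ∈ P.support := by
  classical
  have hsum : (P.takeUntil p hp).length + (P.dropUntil p hp).length = P.length := by
    have := congrArg Walk.length (take_spec P hp)
    rwa [Walk.length_append] at this
  rcases le_or_gt P.length (2 * (P.takeUntil p hp).length) with h | h
  · exact ⟨a, P.takeUntil p hp, hP.takeUntil hp, h, support_takeUntil_subset _ _⟩
  · refine ⟨b, (P.dropUntil p hp).reverse, (hP.dropUntil hp).reverse, ?_, ?_⟩
    · rw [Walk.length_reverse]; omega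
    · intro y hy
      rw [Walk.support_reverse, List.mem_reverse] at hy
      exact support_dropUntil_subset _ _ hy

/-- Any two longest paths intersect. -/
lemma aux_longest_intersect [Fintype V] (hG : G.Connected) {a b a' b' : V}
    {P : G.Walk a b} {Q : G.Walk a' b'}
    (hP : IsLongestPath G P) (hQ : IsLongestPath G Q) :
    ∃ z, z ∈ P.support ∧ z ∈ Q.support := by
  classical
  by_contra hdisj
  push_neg at hdisj
  obtain ⟨pq, hpq_mem, hmin⟩ := Finset.exists_min_image
    (P.support.toFinset ×ˢ Q.support.toFinset) (fun z => G.dist z.1 z.2)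
    ⟨(a, a'), by simp⟩
  obtain ⟨p, q⟩ := pq
  rw [Finset.mem_product, List.mem_toFinset, List.mem_toFinset] at hpq_mem
  obtain ⟨hp, hq⟩ := hpq_mem
  have hmin' : ∀ y z : V, y ∈ P.support → z ∈ Q.support → G.dist p q ≤ G.dist y z := by
    intro y z hy hz
    have := hmin (y, z) (by rw [Finset.mem_product, List.mem_toFinset, List.mem_toFinset]; exact ⟨hy, hz⟩)
    exact this
  obtain ⟨R, hRpath, hRlen⟩ := (hG p q).exists_path_of_dist
  have hpq_ne : p ≠ q := fun h => hdisj p hp (h ▸ hq)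
  have hR1 : 1 ≤ R.length := by
    rw [hRlen]
    exact (hG.pos_dist_of_ne hpq_ne)
  have hRP : ∀ y ∈ R.support, y ∈ P.support → y = p := by
    intro y hy hyP
    have h1 : G.dist y q ≤ (R.dropUntil y hy).length := by
      rw [SimpleGraph.dist_comm]
      have := SimpleGraph.dist_le ((R.dropUntil y hy))
      rwa [SimpleGraph.dist_comm] at this
    have h2 : (R.takeUntil y hy).length + (R.dropUntil y hy).length = R.length := by
      have := congrArg Walk.length (take_spec R hy)
      rwa [Walk.length_append] at this
    have h3 : G.dist p q ≤ G.dist y q := hmin' y q hyP hq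
    have h0 : (R.takeUntil y hy).length = 0 := by omega
    exact (Walk.eq_of_length_eq_zero h0).symm
  have hRQ : ∀ y ∈ R.support, y ∈ Q.support → y = q := by
    intro y hy hyQ
    have h1 : G.dist p y ≤ (R.takeUntil y hy).length := SimpleGraph.dist_le _
    have h2 : (R.takeUntil y hy).length + (R.dropUntil y hy).length = R.length := by
      have := congrArg Walk.length (take_spec R hy)
      rwa [Walk.length_append] at this
    have h3 : G.dist p q ≤ G.dist p y := hmin' p y hp hyQ
    have h0 : (R.dropUntil y hy).length = 0 := by omega
    exact Walk.eq_of_length_eq_zero h0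
  obtain ⟨e1, A1, hA1path, hA1len, hA1sub⟩ := aux_big_arm hP.1 hp
  obtain ⟨e2, A2, hA2path, hA2len, hA2sub⟩ := aux_big_arm hQ.1 hq
  -- combined path : A1 (e1 → p) ++ R (p → q) ++ A2.reverse (q → e2)
  have hRA2 : (R.append A2.reverse).IsPath := by
    refine aux_append_isPath hRpath hA2path.reverse ?_
    intro y hy hy2
    rw [Walk.support_reverse, List.mem_reverse] at hy2
    exact hRQ y hy (hA2sub y hy2)
  have hbig : (A1.append (R.append A2.reverse)).IsPath := by
    refine aux_append_isPath hA1path hRA2 ?_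
    intro y hy hy2
    rw [Walk.mem_support_append_iff] at hy2
    rcases hy2 with h' | h'
    · exact hRP y h' (hA1sub y hy)
    · rw [Walk.support_reverse, List.mem_reverse] at h'
      exact absurd (hA2sub y h') (hdisj y (hA1sub y hy))
  have hle := aux_length_le_max hbig
  rw [Walk.length_append, Walk.length_append, Walk.length_reverse] at hle
  have hPl := hP.2
  have hQl := hQ.2
  omega

/-- Core exchange lemma. -/
lemma aux_core [Fintype V] {x w c eA eD : V}
    (Ta : G.Walk eA x) (D : G.Walk x eD)
    (hTD : (Ta.append D).IsPath)
    (hlen : Ta.length + D.length = maxPathLength G)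
    (M : G.Walk x w) (hM : M.IsPath)
    (S : G.Walk w c) (hS : S.IsPath)
    (hMP : ∀ y ∈ M.support, (y ∈ Ta.support ∨ y ∈ D.support) → y = x)
    (hSP : ∀ y ∈ S.support, (y ∈ Ta.support ∨ y ∈ D.support) → y = c)
    (hMS : ∀ y ∈ M.support, y ∈ S.support → y = w)
    (hc : c ∈ D.support) (hcx : c ≠ x) (hwc : w ≠ c) :
    3 * (M.length + S.length) ≤ maxPathLength G + 2 := by
  classical
  have hTa : Ta.IsPath := hTD.of_append_left
  have hD : D.IsPath := hTD.of_append_right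
  have hTaD : ∀ y ∈ Ta.support, y ∈ D.support → y = x := aux_eq_junction hTD
  have hcTa : c ∉ Ta.support := fun h => hcx (hTaD c h hc)
  set U := D.takeUntil c hc with hU_def
  set T := D.dropUntil c hc with hT_def
  have hU : U.IsPath := hD.takeUntil hc
  have hT : T.IsPath := hD.dropUntil hc
  have hUT : U.length + T.length = D.length := by
    have := congrArg Walk.length (take_spec D hc)
    rwa [Walk.length_append] at this
  have hUTj : ∀ y ∈ U.support, y ∈ T.support → y = c := by
    have : (U.append T).IsPath := by
      rw [hU_def, hT_def, take_spec D hc]; exact hD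
    exact aux_eq_junction this
  have hUsub : ∀ y ∈ U.support, y ∈ D.support := fun y hy => support_takeUntil_subset _ _ hy
  have hTsub : ∀ y ∈ T.support, y ∈ D.support := fun y hy => support_dropUntil_subset _ _ hy
  have hxT : x ∉ T.support := fun h => hcx (hUTj x U.start_mem_support h).symm
  -- path 1 : D.reverse ++ M ++ S'
  obtain ⟨b', S', hS'path, hS'len, hS'sub, hcS'⟩ := aux_dropLast hS hwc
  have hMS' : (M.append S').IsPath := by
    refine aux_append_isPath hM hS'path ?_
    intro y hy hy2
    exact hMS y hy (hS'sub y hy2)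
  have hpath1 : (D.reverse.append (M.append S')).IsPath := by
    refine aux_append_isPath hD.reverse hMS' ?_
    intro y hy hy2
    rw [Walk.support_reverse, List.mem_reverse] at hy
    rw [Walk.mem_support_append_iff] at hy2
    rcases hy2 with h' | h'
    · exact hMP y h' (Or.inr hy)
    · exact absurd ((hSP y (hS'sub y h') (Or.inr hy)) ▸ h') hcS'
  have e1 : D.length + (M.length + S'.length) ≤ maxPathLength G := by
    have := aux_length_le_max hpath1
    rwa [Walk.length_append, Walk.length_append, Walk.length_reverse] at this
  -- path 2 : Ta ++ M ++ S ++ T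
  have hST : (S.append T).IsPath := by
    refine aux_append_isPath hS hT ?_
    intro y hy hy2
    exact hSP y hy (Or.inr (hTsub y hy2))
  have hMST : (M.append (S.append T)).IsPath := by
    refine aux_append_isPath hM hST ?_
    intro y hy hy2
    rw [Walk.mem_support_append_iff] at hy2
    rcases hy2 with h' | h'
    · exact hMS y hy h'
    · exact absurd ((hMP y hy (Or.inr (hTsub y h'))) ▸ h') hxT
  have hpath2 : (Ta.append (M.append (S.append T))).IsPath := by
    refine aux_append_isPath hTa hMST ?_
    intro y hy hy2
    rw [Walk.mem_support_append_iff, Walk.mem_support_append_iff] at hy2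
    rcases hy2 with h' | h' | h'
    · exact hMP y h' (Or.inl hy)
    · exact absurd ((hSP y h' (Or.inl hy)) ▸ hy) hcTa
    · exact hTaD y hy (hTsub y h')
  have e2 : Ta.length + (M.length + (S.length + T.length)) ≤ maxPathLength G := by
    have := aux_length_le_max hpath2
    rwa [Walk.length_append, Walk.length_append, Walk.length_append] at this
  -- path 3 : Ta ++ M ++ S ++ q₃ where q₃ = U.reverse minus last vertex
  have hcxU : c ≠ x := hcx
  obtain ⟨y0, q3, hq3path, hq3len, hq3sub, hxq3⟩ := aux_dropLast hU.reverse hcxU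
  have hq3subU : ∀ y ∈ q3.support, y ∈ U.support := by
    intro y hy
    have := hq3sub y hy
    rwa [Walk.support_reverse, List.mem_reverse] at this
  have hSq3 : (S.append q3).IsPath := by
    refine aux_append_isPath hS hq3path ?_
    intro y hy hy2
    exact hSP y hy (Or.inr (hUsub y (hq3subU y hy2)))
  have hMSq3 : (M.append (S.append q3)).IsPath := by
    refine aux_append_isPath hM hSq3 ?_
    intro y hy hy2
    rw [Walk.mem_support_append_iff] at hy2
    rcases hy2 with h' | h'
    · exact hMS y hy h'
    · exact absurd ((hMP y hy (Or.inr (hUsub y (hq3subU y h')))) ▸ h') hxq3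
  have hpath3 : (Ta.append (M.append (S.append q3))).IsPath := by
    refine aux_append_isPath hTa hMSq3 ?_
    intro y hy hy2
    rw [Walk.mem_support_append_iff, Walk.mem_support_append_iff] at hy2
    rcases hy2 with h' | h' | h'
    · exact hMP y h' (Or.inl hy)
    · exact absurd ((hSP y h' (Or.inl hy)) ▸ hy) hcTa
    · exact hTaD y hy (hUsub y (hq3subU y h'))
  have e3 : Ta.length + (M.length + (S.length + q3.length)) ≤ maxPathLength G := by
    have := aux_length_le_max hpath3
    rwa [Walk.length_append, Walk.length_append, Walk.length_append] at this
  have hq3l : q3.length + 1 = U.length := by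
    rw [Walk.length_reverse] at hq3len; exact hq3len
  omega

end Core


/-- For a set `P` of three longest paths of a finite connected graph,
`l(G) ≥ 6 · f(G, P) − 2`. -/
theorem maxPathLength_ge {V : Type} [Fintype V] (G : SimpleGraph V) (hG : G.Connected)
    {u₁ v₁ u₂ v₂ u₃ v₃ : V} (p₁ : G.Walk u₁ v₁) (p₂ : G.Walk u₂ v₂) (p₃ : G.Walk u₃ v₃)
    (h₁ : IsLongestPath G p₁) (h₂ : IsLongestPath G p₂) (h₃ : IsLongestPath G p₃)
    (hne₁₂ : pathSigma G p₁ ≠ pathSigma G p₂)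
    (hne₁₃ : pathSigma G p₁ ≠ pathSigma G p₃)
    (hne₂₃ : pathSigma G p₂ ≠ pathSigma G p₃) :
    (maxPathLength G : ℤ) ≥ 6 * (fThree G p₁ p₂ p₃ : ℤ) - 2 := by
  classical
  have main : 6 * fThree G p₁ p₂ p₃ ≤ maxPathLength G + 2 := by
    set f := fThree G p₁ p₂ p₃ with hf_def
    rcases Nat.eq_zero_or_pos f with hf0 | hfpos
    · omega
    have hfle : ∀ y : V, f ≤ distToSet G y (walkVerts p₁) + distToSet G y (walkVerts p₂) +
        distToSet G y (walkVerts p₃) := fun y => Nat.sInf_le ⟨y, rfl⟩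
    have hB12 : ∀ y, y ∈ p₁.support → y ∈ p₂.support → f ≤ distToSet G y (walkVerts p₃) := by
      intro y hy1 hy2
      have h := hfle y
      rwa [aux_distToSet_eq_zero (show y ∈ walkVerts p₁ from hy1),
        aux_distToSet_eq_zero (show y ∈ walkVerts p₂ from hy2), zero_add, zero_add] at h
    have hB13 : ∀ y, y ∈ p₁.support → y ∈ p₃.support → f ≤ distToSet G y (walkVerts p₂) := by
      intro y hy1 hy3
      have h := hfle y
      rwa [aux_distToSet_eq_zero (show y ∈ walkVerts p₁ from hy1),
        aux_distToSet_eq_zero (show y ∈ walkVerts p₃ from hy3), zero_add, add_zero] at h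
    have hB23 : ∀ y, y ∈ p₂.support → y ∈ p₃.support → f ≤ distToSet G y (walkVerts p₁) := by
      intro y hy2 hy3
      have h := hfle y
      rwa [aux_distToSet_eq_zero (show y ∈ walkVerts p₂ from hy2),
        aux_distToSet_eq_zero (show y ∈ walkVerts p₃ from hy3), add_zero, add_zero] at h
    obtain ⟨x₀, hx₀1, hx₀2⟩ := aux_longest_intersect hG h₁ h₂
    obtain ⟨w₀, hw₀1, hw₀3⟩ := aux_longest_intersect hG h₁ h₃
    obtain ⟨c₀, hc₀2, hc₀3⟩ := aux_longest_intersect hG h₂ h₃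
    -- construct M : Walk x w inside p₁ with M ∩ p₂ = {x}, M ∩ p₃ = {w}
    obtain ⟨Wb, hWb⟩ := aux_walk_in_support p₁ hx₀1 hw₀1
    obtain ⟨w, W₁, hw3, hW₁sub, hW₁cl⟩ :=
      aux_first_hit Wb {y | y ∈ p₃.support} (show w₀ ∈ {y | y ∈ p₃.support} from hw₀3)
    obtain ⟨x, S₂, hx2, hS₂sub, hS₂cl⟩ :=
      aux_first_hit W₁.reverse {y | y ∈ p₂.support} (show x₀ ∈ {y | y ∈ p₂.support} from hx₀2)
    set M := S₂.reverse.bypass with hM_def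
    have hMpath : M.IsPath := S₂.reverse.bypass_isPath
    have hMsubS₂ : ∀ y ∈ M.support, y ∈ S₂.support := by
      intro y hy
      have h := Walk.support_bypass_subset _ hy
      rwa [Walk.support_reverse, List.mem_reverse] at h
    have hMsubW₁ : ∀ y ∈ M.support, y ∈ W₁.support := by
      intro y hy
      have h := hS₂sub y (hMsubS₂ y hy)
      rwa [Walk.support_reverse, List.mem_reverse] at h
    have hMsub1 : ∀ y ∈ M.support, y ∈ p₁.support := fun y hy => hWb y (hW₁sub y (hMsubW₁ y hy))
    have hMP2 : ∀ y ∈ M.support, y ∈ p₂.support → y = x :=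
      fun y hy h2 => hS₂cl y (hMsubS₂ y hy) h2
    have hMP3 : ∀ y ∈ M.support, y ∈ p₃.support → y = w :=
      fun y hy h3 => hW₁cl y (hMsubW₁ y hy) h3
    have hx1 : x ∈ p₁.support := hMsub1 x M.start_mem_support
    have hw1 : w ∈ p₁.support := hMsub1 w M.end_mem_support
    have hw3' : w ∈ p₃.support := hw3
    have hx2' : x ∈ p₂.support := hx2
    have hwn2 : w ∉ p₂.support := by
      intro h
      have hb := hB13 w hw1 hw3'
      rw [aux_distToSet_eq_zero (show w ∈ walkVerts p₂ from h)] at hb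
      omega
    have hxn3 : x ∉ p₃.support := by
      intro h
      have hb := hB12 x hx1 hx2'
      rw [aux_distToSet_eq_zero (show x ∈ walkVerts p₃ from h)] at hb
      omega
    -- construct S : Walk w c inside p₃ with S ∩ p₂ = {c}
    obtain ⟨Wb2, hWb2⟩ := aux_walk_in_support p₃ hw3' hc₀3
    obtain ⟨c, S₁, hc2, hS₁sub, hS₁cl⟩ :=
      aux_first_hit Wb2 {y | y ∈ p₂.support} (show c₀ ∈ {y | y ∈ p₂.support} from hc₀2)
    set S := S₁.bypass with hS_def
    have hSpath : S.IsPath := S₁.bypass_isPath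
    have hSsubS₁ : ∀ y ∈ S.support, y ∈ S₁.support := fun y hy => Walk.support_bypass_subset _ hy
    have hSsub3 : ∀ y ∈ S.support, y ∈ p₃.support := fun y hy => hWb2 y (hS₁sub y (hSsubS₁ y hy))
    have hSP2 : ∀ y ∈ S.support, y ∈ p₂.support → y = c :=
      fun y hy h2 => hS₁cl y (hSsubS₁ y hy) h2
    have hMS : ∀ y ∈ M.support, y ∈ S.support → y = w :=
      fun y hy hy' => hMP3 y hy (hSsub3 y hy')
    have hc2' : c ∈ p₂.support := hc2
    have hc3 : c ∈ p₃.support := hSsub3 c S.end_mem_support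
    have hwc : w ≠ c := fun h => hwn2 (h ▸ hc2')
    have hcx : c ≠ x := fun h => hxn3 (h ▸ hc3)
    -- length lower bounds
    have hgf : f ≤ M.length := by
      have hb1 : f ≤ distToSet G x (walkVerts p₃) := hB12 x hx1 hx2'
      have hb2 : distToSet G x (walkVerts p₃) ≤ G.dist x w :=
        aux_distToSet_le (show w ∈ walkVerts p₃ from hw3')
      have hb3 : G.dist x w ≤ M.length := SimpleGraph.dist_le M
      omega
    have hsf : f ≤ S.length := by
      have hb1 : f ≤ distToSet G c (walkVerts p₁) := hB23 c hc2' hc3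
      have hb2 : distToSet G c (walkVerts p₁) ≤ G.dist c w :=
        aux_distToSet_le (show w ∈ walkVerts p₁ from hw1)
      have hb3 : G.dist c w ≤ S.length := by
        rw [SimpleGraph.dist_comm]
        exact SimpleGraph.dist_le S
      omega
    -- split p₂ at x and apply the core lemma
    have hlen2 : (p₂.takeUntil x hx2').length + (p₂.dropUntil x hx2').length = maxPathLength G := by
      have h := congrArg Walk.length (take_spec p₂ hx2')
      rw [Walk.length_append] at h
      rw [h, h₂.2]
    have hsplit : c ∈ (p₂.takeUntil x hx2').support ∨ c ∈ (p₂.dropUntil x hx2').support := by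
      have h := hc2'
      rwa [← take_spec p₂ hx2', Walk.mem_support_append_iff] at h
    rcases hsplit with hcside | hcside
    · -- c on the take side: reverse the decomposition
      have hTD : ((p₂.dropUntil x hx2').reverse.append (p₂.takeUntil x hx2').reverse).IsPath := by
        rw [← Walk.reverse_append, take_spec]
        exact h₂.1.reverse
      have hcover : ∀ y : V, (y ∈ (p₂.dropUntil x hx2').reverse.support ∨
          y ∈ (p₂.takeUntil x hx2').reverse.support) → y ∈ p₂.support := by
        intro y hy
        rcases hy with hy | hy <;> rw [Walk.support_reverse, List.mem_reverse] at hy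
        · exact support_dropUntil_subset _ _ hy
        · exact support_takeUntil_subset _ _ hy
      have key := aux_core ((p₂.dropUntil x hx2').reverse) ((p₂.takeUntil x hx2').reverse) hTD
        (by rw [Walk.length_reverse, Walk.length_reverse]; omega)
        M hMpath S hSpath
        (fun y hy h' => hMP2 y hy (hcover y h'))
        (fun y hy h' => hSP2 y hy (hcover y h'))
        hMS
        (by rw [Walk.support_reverse, List.mem_reverse]; exact hcside)
        hcx hwc
      omega
    · -- c on the drop side
      have hTD : ((p₂.takeUntil x hx2').append (p₂.dropUntil x hx2')).IsPath := by
        rw [take_spec]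
        exact h₂.1
      have hcover : ∀ y : V, (y ∈ (p₂.takeUntil x hx2').support ∨
          y ∈ (p₂.dropUntil x hx2').support) → y ∈ p₂.support := by
        intro y hy
        rcases hy with hy | hy
        · exact support_takeUntil_subset _ _ hy
        · exact support_dropUntil_subset _ _ hy
      have key := aux_core (p₂.takeUntil x hx2') (p₂.dropUntil x hx2') hTD hlen2
        M hMpath S hSpath
        (fun y hy h' => hMP2 y hy (hcover y h'))
        (fun y hy h' => hSP2 y hy (hcover y h'))
        hMS hcside hcx hwc
      omega
  omega
end
end

section
/- The following two statements are equivalent: (i) for every finite connected graph G and every set P of three longest paths of G, f(G,P) = 0; (ii) there exists a sublinear non-decreasing function g : ℕ → ℝ (i.e., g(n)/n → 0 as n → ∞ and g is monotone non-decreasing) such that for every finite connected graph G of order n and every set P of three longest paths of G, f(G,P) ≤ g(n). -/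
open SimpleGraph

noncomputable section

namespace ThreePathsAux

variable {V : Type}

/-- Oriented edges of `G`. -/
abbrev OEdge (G : SimpleGraph V) : Type := {e : V × V // G.Adj e.1 e.2}

/-- Vertex type of the subdivided/pendant graph. -/
abbrev VmT (G : SimpleGraph V) (m' : ℕ) : Type :=
  V ⊕ ((V × Fin m') ⊕ (OEdge G × Fin m'))

/-- Base relation for the adjacency of the auxiliary graph. -/
inductive Rel (G : SimpleGraph V) (m' : ℕ) : VmT G m' → VmT G m' → Prop where
  | pen0 (v : V) (j : Fin m') (hj : (j : ℕ) = 0) :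
      Rel G m' (Sum.inl v) (Sum.inr (Sum.inl (v, j)))
  | penS (v : V) (j j' : Fin m') (hj : (j' : ℕ) = (j : ℕ) + 1) :
      Rel G m' (Sum.inr (Sum.inl (v, j))) (Sum.inr (Sum.inl (v, j')))
  | lane0 (u : V) (e : OEdge G) (j : Fin m') (hu : e.val.1 = u) (hj : (j : ℕ) = 0) :
      Rel G m' (Sum.inl u) (Sum.inr (Sum.inr (e, j)))
  | laneS (e : OEdge G) (j j' : Fin m') (hj : (j' : ℕ) = (j : ℕ) + 1) :
      Rel G m' (Sum.inr (Sum.inr (e, j))) (Sum.inr (Sum.inr (e, j')))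
  | laneE (w : V) (e : OEdge G) (j : Fin m') (hw : e.val.2 = w) (hj : (j : ℕ) = m' - 1) :
      Rel G m' (Sum.inr (Sum.inr (e, j))) (Sum.inl w)

/-- The auxiliary graph: each edge subdivided into a path with `m'` interior
vertices (one lane for each orientation), and a pendant path with `m'` vertices
attached to each original vertex. -/
def Gm (G : SimpleGraph V) (m' : ℕ) : SimpleGraph (VmT G m') where
  Adj x y := Rel G m' x y ∨ Rel G m' y x
  symm := ⟨fun x y h => h.symm⟩
  loopless := ⟨by
    intro x h
    rcases h with h | h <;> cases h <;> omega⟩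

attribute [reducible] Gm

variable {G : SimpleGraph V} {m' : ℕ}

lemma gm_adj {x y : VmT G m'} : (Gm G m').Adj x y ↔ Rel G m' x y ∨ Rel G m' y x := Iff.rfl

/-- Pendant walk from the `j`-th pendant vertex of `v` down to `v`. -/
def penWalk (v : V) : (j : ℕ) → (hj : j < m') →
    (Gm G m').Walk (Sum.inr (Sum.inl (v, ⟨j, hj⟩))) (Sum.inl v)
  | 0, hj => Walk.cons (Or.inr (Rel.pen0 v ⟨0, hj⟩ rfl)) Walk.nil
  | j+1, hj => Walk.cons
      (Or.inr (Rel.penS v ⟨j, Nat.lt_of_succ_lt hj⟩ ⟨j+1, hj⟩ rfl))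
      (penWalk v j (Nat.lt_of_succ_lt hj))

@[simp] lemma length_penWalk (v : V) (j : ℕ) (hj : j < m') :
    (penWalk (G := G) v j hj).length = j + 1 := by
  induction j with
  | zero => simp [penWalk, Walk.length_cons, Walk.length_nil]
  | succ j ih => simp [penWalk, Walk.length_cons, ih]

/-- Lane walk from interior vertex `j` of lane `e` up to the endpoint `e.val.2`;
`fuel = m' - 1 - j`. -/
def laneUp (e : OEdge G) : (fuel : ℕ) → (j : ℕ) → (h : j + fuel + 1 = m') →
    (Gm G m').Walk (Sum.inr (Sum.inr (e, ⟨j, by omega⟩))) (Sum.inl e.val.2)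
  | 0, j, h => Walk.cons (Or.inl (Rel.laneE e.val.2 e ⟨j, by omega⟩ rfl (show j = m' - 1 by omega))) Walk.nil
  | fuel+1, j, h => Walk.cons
      (Or.inl (Rel.laneS e ⟨j, by omega⟩ ⟨j+1, by omega⟩ rfl))
      (laneUp e fuel (j+1) (by omega))

@[simp] lemma length_laneUp (e : OEdge G) (fuel j : ℕ) (h : j + fuel + 1 = m') :
    (laneUp (G := G) e fuel j h).length = fuel + 1 := by
  induction fuel generalizing j with
  | zero => simp [laneUp, Walk.length_cons, Walk.length_nil]
  | succ fuel ih => simp [laneUp, Walk.length_cons, ih]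

/-- Full lane walk from `e.val.1` to `e.val.2` (length `m' + 1`). -/
def laneFull (e : OEdge G) (hm : 0 < m') :
    (Gm G m').Walk (Sum.inl e.val.1) (Sum.inl e.val.2) :=
  Walk.cons (Or.inl (Rel.lane0 e.val.1 e ⟨0, hm⟩ rfl rfl)) (laneUp e (m'-1) 0 (by omega))

@[simp] lemma length_laneFull (e : OEdge G) (hm : 0 < m') :
    (laneFull e hm).length = m' + 1 := by
  simp [laneFull]
  omega

/-- Lift of a walk of `G` to the auxiliary graph. -/
def liftWalk (hm : 0 < m') : {a b : V} → (p : G.Walk a b) →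
    (Gm G m').Walk (Sum.inl a) (Sum.inl b)
  | _, _, Walk.nil => Walk.nil
  | _, _, Walk.cons h q => (laneFull ⟨(_, _), h⟩ hm).append (liftWalk hm q)

@[simp] lemma length_liftWalk (hm : 0 < m') {a b : V} (p : G.Walk a b) :
    (liftWalk hm p).length = (m' + 1) * p.length := by
  induction p with
  | nil => simp [liftWalk]
  | cons h q ih => simp [liftWalk, ih]; ring

/-- Projection to original vertices. -/
def origOf : VmT G m' → Option V
  | Sum.inl v => some v
  | _ => none

@[simp] lemma origOf_inl (v : V) : origOf (G := G) (m' := m') (Sum.inl v) = some v := rfl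
@[simp] lemma origOf_pen (v : V) (j : Fin m') :
    origOf (G := G) (Sum.inr (Sum.inl (v, j))) = none := rfl
@[simp] lemma origOf_lane (e : OEdge G) (j : Fin m') :
    origOf (G := G) (Sum.inr (Sum.inr (e, j))) = none := rfl

lemma mem_support_penWalk {v : V} {j : ℕ} {hj : j < m'} {z : VmT G m'} :
    z ∈ (penWalk (G := G) v j hj).support ↔
      (∃ i : Fin m', (i : ℕ) ≤ j ∧ z = Sum.inr (Sum.inl (v, i))) ∨ z = Sum.inl v := by
  induction j with
  | zero =>
    simp only [penWalk, Walk.support_cons, Walk.support_nil, List.mem_cons,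
      List.mem_singleton, List.not_mem_nil, or_false]
    constructor
    · rintro (rfl | rfl)
      · exact Or.inl ⟨⟨0, hj⟩, le_of_eq rfl, rfl⟩
      · exact Or.inr rfl
    · rintro (⟨i, hi, rfl⟩ | rfl)
      · have : i = ⟨0, hj⟩ := Fin.ext (show (i:ℕ) = 0 by omega)
        left; rw [this]
      · right; rfl
  | succ j ih =>
    simp only [penWalk, Walk.support_cons, List.mem_cons]
    rw [ih]
    constructor
    · rintro (rfl | (⟨i, hi, rfl⟩ | rfl))
      · exact Or.inl ⟨⟨j+1, hj⟩, le_of_eq rfl, rfl⟩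
      · exact Or.inl ⟨i, by omega, rfl⟩
      · exact Or.inr rfl
    · rintro (⟨i, hi, rfl⟩ | rfl)
      · rcases Nat.lt_or_ge (i : ℕ) (j+1) with h' | h'
        · exact Or.inr (Or.inl ⟨i, by omega, rfl⟩)
        · have : i = ⟨j+1, hj⟩ := Fin.ext (show (i:ℕ) = j+1 by omega)
          left; rw [this]
      · exact Or.inr (Or.inr rfl)

lemma isPath_penWalk (v : V) (j : ℕ) (hj : j < m') :
    (penWalk (G := G) v j hj).IsPath := by
  induction j with
  | zero =>
    rw [penWalk]
    simp [Walk.cons_isPath_iff]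
  | succ j ih =>
    rw [penWalk, Walk.cons_isPath_iff]
    refine ⟨ih _, ?_⟩
    rw [mem_support_penWalk]
    rintro (⟨i, hi, h⟩ | h)
    · simp only [Sum.inr.injEq, Sum.inl.injEq, Prod.mk.injEq] at h
      have := congrArg Fin.val h.2
      simp at this; omega
    · exact absurd h (by simp)

lemma filterMap_penWalk (v : V) (j : ℕ) (hj : j < m') :
    ((penWalk (G := G) v j hj).support).filterMap origOf = [v] := by
  induction j with
  | zero => simp [penWalk, List.filterMap_cons]
  | succ j ih => simp [penWalk, List.filterMap_cons, ih]

lemma mem_support_laneUp {e : OEdge G} {fuel j : ℕ} {h : j + fuel + 1 = m'} {z : VmT G m'} :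
    z ∈ (laneUp (G := G) e fuel j h).support ↔
      (∃ i : Fin m', j ≤ (i : ℕ) ∧ z = Sum.inr (Sum.inr (e, i))) ∨ z = Sum.inl e.val.2 := by
  induction fuel generalizing j with
  | zero =>
    simp only [laneUp, Walk.support_cons, Walk.support_nil, List.mem_cons,
      List.mem_singleton, List.not_mem_nil, or_false]
    constructor
    · rintro (rfl | rfl)
      · exact Or.inl ⟨⟨j, by omega⟩, le_of_eq rfl, rfl⟩
      · exact Or.inr rfl
    · rintro (⟨i, hi, rfl⟩ | rfl)
      · have : i = ⟨j, by omega⟩ := Fin.ext (show (i:ℕ) = j by omega)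
        left; rw [this]
      · right; rfl
  | succ fuel ih =>
    simp only [laneUp, Walk.support_cons, List.mem_cons]
    rw [ih]
    constructor
    · rintro (rfl | (⟨i, hi, rfl⟩ | rfl))
      · exact Or.inl ⟨⟨j, by omega⟩, le_of_eq rfl, rfl⟩
      · exact Or.inl ⟨i, by omega, rfl⟩
      · exact Or.inr rfl
    · rintro (⟨i, hi, rfl⟩ | rfl)
      · rcases Nat.lt_or_ge j (i : ℕ) with h' | h'
        · exact Or.inr (Or.inl ⟨i, by omega, rfl⟩)
        · have : i = ⟨j, by omega⟩ := Fin.ext (show (i:ℕ) = j by omega)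
          left; rw [this]
      · exact Or.inr (Or.inr rfl)

lemma isPath_laneUp (e : OEdge G) (fuel j : ℕ) (h : j + fuel + 1 = m') :
    (laneUp (G := G) e fuel j h).IsPath := by
  induction fuel generalizing j with
  | zero =>
    rw [laneUp]
    simp [Walk.cons_isPath_iff]
  | succ fuel ih =>
    rw [laneUp, Walk.cons_isPath_iff]
    refine ⟨ih _ _, ?_⟩
    rw [mem_support_laneUp]
    rintro (⟨i, hi, hz⟩ | hz)
    · simp only [Sum.inr.injEq, Prod.mk.injEq] at hz
      have := congrArg Fin.val hz.2
      simp at this; omega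
    · exact absurd hz (by simp)

lemma filterMap_laneUp (e : OEdge G) (fuel j : ℕ) (h : j + fuel + 1 = m') :
    ((laneUp (G := G) e fuel j h).support).filterMap origOf = [e.val.2] := by
  induction fuel generalizing j with
  | zero => simp [laneUp, List.filterMap_cons]
  | succ fuel ih => simp [laneUp, List.filterMap_cons, ih]
lemma mem_support_laneFull {e : OEdge G} {hm : 0 < m'} {z : VmT G m'} :
    z ∈ (laneFull e hm).support ↔
      z = Sum.inl e.val.1 ∨ z = Sum.inl e.val.2 ∨ ∃ i : Fin m', z = Sum.inr (Sum.inr (e, i)) := by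
  simp only [laneFull, Walk.support_cons, List.mem_cons, mem_support_laneUp]
  constructor
  · rintro (rfl | (⟨i, hi, rfl⟩ | rfl))
    · exact Or.inl rfl
    · exact Or.inr (Or.inr ⟨i, rfl⟩)
    · exact Or.inr (Or.inl rfl)
  · rintro (rfl | rfl | ⟨i, rfl⟩)
    · exact Or.inl rfl
    · exact Or.inr (Or.inr rfl)
    · exact Or.inr (Or.inl ⟨i, by omega, rfl⟩)

lemma isPath_laneFull (e : OEdge G) (hm : 0 < m') : (laneFull e hm).IsPath := by
  rw [laneFull, Walk.cons_isPath_iff]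
  refine ⟨isPath_laneUp _ _ _ _, ?_⟩
  rw [mem_support_laneUp]
  rintro (⟨i, hi, h⟩ | h)
  · exact absurd h (by simp)
  · have : e.val.1 = e.val.2 := by injection h
    exact e.prop.ne this

lemma filterMap_laneFull (e : OEdge G) (hm : 0 < m') :
    ((laneFull e hm).support).filterMap origOf = [e.val.1, e.val.2] := by
  simp [laneFull, filterMap_laneUp]

lemma mem_liftWalk_orig {hm : 0 < m'} {a b : V} {p : G.Walk a b} {v : V} :
    (Sum.inl v : VmT G m') ∈ (liftWalk hm p).support ↔ v ∈ p.support := by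
  induction p with
  | nil => simp [liftWalk]
  | cons h q ih =>
    rw [liftWalk, Walk.mem_support_append_iff]
    simp only [mem_support_laneFull, Walk.support_cons, List.mem_cons, ih]
    constructor
    · rintro ((h1 | h1 | ⟨i, h1⟩) | h1)
      · exact Or.inl (by injection h1)
      · refine Or.inr ?_
        have h2 := Sum.inl_injective h1
        exact h2 ▸ Walk.start_mem_support q
      · exact absurd h1 (by simp)
      · exact Or.inr h1
    · rintro (rfl | h1)
      · exact Or.inl (Or.inl rfl)
      · exact Or.inr h1

lemma mem_liftWalk_pen {hm : 0 < m'} {a b : V} {p : G.Walk a b} {v : V} {j : Fin m'} :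
    (Sum.inr (Sum.inl (v, j)) : VmT G m') ∉ (liftWalk hm p).support := by
  induction p with
  | nil => simp [liftWalk]
  | cons h q ih =>
    rw [liftWalk, Walk.mem_support_append_iff]
    rintro (h1 | h1)
    · rw [mem_support_laneFull] at h1
      rcases h1 with h1 | h1 | ⟨i, h1⟩ <;> simp at h1
    · exact ih h1

lemma mem_liftWalk_lane {hm : 0 < m'} {a b : V} {p : G.Walk a b} {e : OEdge G} {j : Fin m'} :
    (Sum.inr (Sum.inr (e, j)) : VmT G m') ∈ (liftWalk hm p).support →
      ∃ d ∈ p.darts, d.toProd = e.val := by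
  induction p with
  | nil => intro h1; simp [liftWalk] at h1
  | cons h q ih =>
    rw [liftWalk, Walk.mem_support_append_iff]
    rintro (h1 | h1)
    · rw [mem_support_laneFull] at h1
      rcases h1 with h1 | h1 | ⟨i, h1⟩
      · exact absurd h1 (by simp)
      · exact absurd h1 (by simp)
      · refine ⟨⟨(_, _), h⟩, by simp [Walk.darts_cons], ?_⟩
        simp only [Sum.inr.injEq, Prod.mk.injEq] at h1
        rw [h1.1]
    · obtain ⟨d, hd, hde⟩ := ih h1
      exact ⟨d, by simp [Walk.darts_cons, hd], hde⟩

lemma filterMap_liftWalk {hm : 0 < m'} {a b : V} (p : G.Walk a b) :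
    ((liftWalk (G := G) hm p).support).filterMap origOf = p.support := by
  induction p with
  | nil => simp [liftWalk]
  | cons h q ih =>
    rw [liftWalk, Walk.support_append, List.filterMap_append, filterMap_laneFull]
    have h1 : (liftWalk (G := G) hm q).support
        = Sum.inl _ :: (liftWalk (G := G) hm q).support.tail :=
      Walk.support_eq_cons _
    rw [h1] at ih
    simp only [List.filterMap_cons, origOf_inl] at ih
    have h2 : q.support = _ :: q.support.tail := Walk.support_eq_cons q
    rw [h2] at ih
    have h3 := List.tail_eq_of_cons_eq ih
    rw [h3, Walk.support_cons, h2]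
    rfl

lemma isPath_liftWalk {hm : 0 < m'} {a b : V} {p : G.Walk a b} (hp : p.IsPath) :
    (liftWalk (G := G) hm p).IsPath := by
  induction p with
  | nil => simp [liftWalk]
  | cons h q ih =>
    rw [Walk.cons_isPath_iff] at hp
    have ihq := ih hp.1
    rw [liftWalk, Walk.isPath_def, Walk.support_append, List.nodup_append]
    refine ⟨(isPath_laneFull _ _).2, ((ihq.2).sublist (List.tail_sublist _)), ?_⟩
    intro z hz1 z' hz2 hzz; subst hzz
    have hz2' : z ∈ (liftWalk (G := G) hm q).support := List.mem_of_mem_tail hz2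
    rw [mem_support_laneFull] at hz1
    rcases hz1 with rfl | rfl | ⟨i, rfl⟩
    · exact hp.2 (mem_liftWalk_orig.mp hz2')
    · have h1 : (liftWalk (G := G) hm q).support
          = Sum.inl _ :: (liftWalk (G := G) hm q).support.tail :=
        Walk.support_eq_cons _
      rw [Walk.isPath_def, h1, List.nodup_cons] at ihq
      exact ihq.1 hz2
    · obtain ⟨d, hd, hde⟩ := mem_liftWalk_lane hz2'
      have : d.toProd.1 ∈ q.support := Walk.dart_fst_mem_support_of_mem_darts _ hd
      rw [hde] at this
      exact hp.2 this
lemma mlt (hm : 0 < m') : m' - 1 < m' := Nat.sub_lt hm one_pos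

/-- The canonical longest path of `Gm`: pendant of `a`, then the lifted walk,
then the pendant of `b`. -/
def pathM (hm : 0 < m') {a b : V} (p : G.Walk a b) :
    (Gm G m').Walk (Sum.inr (Sum.inl (a, ⟨m'-1, mlt hm⟩)))
      (Sum.inr (Sum.inl (b, ⟨m'-1, mlt hm⟩))) :=
  (penWalk a (m'-1) (mlt hm)).append
    ((liftWalk hm p).append ((penWalk b (m'-1) (mlt hm)).reverse))

lemma length_pathM (hm : 0 < m') {a b : V} (p : G.Walk a b) :
    (pathM (G := G) hm p).length = (m' + 1) * p.length + 2 * m' := by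
  simp only [pathM, Walk.length_append, Walk.length_reverse, length_penWalk, length_liftWalk]
  generalize (m' + 1) * p.length = X
  omega

lemma support_pathM (hm : 0 < m') {a b : V} (p : G.Walk a b) :
    (pathM (G := G) hm p).support =
      (penWalk (G := G) a (m'-1) (mlt hm)).support ++
        ((liftWalk (G := G) hm p).support.tail ++
          ((penWalk (G := G) b (m'-1) (mlt hm)).reverse.support.tail)) := by
  conv_lhs => rw [pathM]
  rw [Walk.support_append, Walk.support_append, Walk.support_eq_cons (liftWalk hm p)]
  rfl

lemma mem_penBrev_tail {b : V} {z : VmT G m'} (hm : 0 < m')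
    (hz : z ∈ ((penWalk (G := G) b (m'-1) (mlt hm)).reverse.support.tail)) :
    ∃ i : Fin m', z = Sum.inr (Sum.inl (b, i)) := by
  have h1 : z ∈ (penWalk (G := G) b (m'-1) (mlt hm)).reverse.support :=
    List.mem_of_mem_tail hz
  rw [Walk.support_reverse, List.mem_reverse, mem_support_penWalk] at h1
  rcases h1 with ⟨i, hi, rfl⟩ | rfl
  · exact ⟨i, rfl⟩
  · exfalso
    have h2 : (penWalk (G := G) b (m'-1) (mlt hm)).reverse.support
        = Sum.inl b :: (penWalk (G := G) b (m'-1) (mlt hm)).reverse.support.tail :=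
      Walk.support_eq_cons _
    have h3 : ((penWalk (G := G) b (m'-1) (mlt hm)).reverse.support).Nodup :=
      (Walk.isPath_def _).mp (isPath_penWalk b (m'-1) (mlt hm)).reverse
    rw [h2, List.nodup_cons] at h3
    exact h3.1 hz

lemma isPath_pathM (hm : 0 < m') {a b : V} {p : G.Walk a b} (hp : p.IsPath) (hab : a ≠ b) :
    (pathM (G := G) hm p).IsPath := by
  rw [Walk.isPath_def, support_pathM, List.nodup_append, List.nodup_append]
  have hliftpath := isPath_liftWalk (hm := hm) hp
  have hliftnodup := (Walk.isPath_def _).mp hliftpath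
  have hliftcons : (liftWalk (G := G) hm p).support
      = Sum.inl a :: (liftWalk (G := G) hm p).support.tail := Walk.support_eq_cons _
  refine ⟨(Walk.isPath_def _).mp (isPath_penWalk a (m'-1) (mlt hm)),
    ⟨hliftnodup.sublist (List.tail_sublist _),
     ((Walk.isPath_def _).mp (isPath_penWalk b (m'-1) (mlt hm)).reverse).sublist
       (List.tail_sublist _), ?_⟩, ?_⟩
  · intro z hz1 z' hz2 hzz; subst hzz
    obtain ⟨i, rfl⟩ := mem_penBrev_tail hm hz2
    exact mem_liftWalk_pen (List.mem_of_mem_tail hz1)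
  · intro z hz1 z' hz2 hzz; subst hzz
    rw [mem_support_penWalk] at hz1
    rcases List.mem_append.mp hz2 with hz2 | hz2
    · rcases hz1 with ⟨i, hi, rfl⟩ | rfl
      · exact mem_liftWalk_pen (List.mem_of_mem_tail hz2)
      · rw [hliftcons, List.nodup_cons] at hliftnodup
        exact hliftnodup.1 hz2
    · obtain ⟨i', hz⟩ := mem_penBrev_tail hm hz2
      rcases hz1 with ⟨i, hi, rfl⟩ | rfl
      · simp only [Sum.inr.injEq, Sum.inl.injEq, Prod.mk.injEq] at hz
        exact hab hz.1
      · simp at hz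

lemma filterMap_pathM (hm : 0 < m') {a b : V} (p : G.Walk a b) :
    ((pathM (G := G) hm p).support).filterMap origOf = p.support := by
  rw [support_pathM, List.filterMap_append, List.filterMap_append, filterMap_penWalk]
  have h1 : ((liftWalk (G := G) hm p).support).filterMap origOf = p.support :=
    filterMap_liftWalk p
  rw [Walk.support_eq_cons (liftWalk hm p)] at h1
  simp only [List.filterMap_cons, origOf_inl] at h1
  rw [Walk.support_eq_cons p] at h1
  have h2 := List.tail_eq_of_cons_eq h1
  have h3 : (((penWalk (G := G) b (m'-1) (mlt hm)).reverse.support).filterMap origOf) = [b] := by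
    rw [Walk.support_reverse, List.filterMap_reverse, filterMap_penWalk]
    rfl
  rw [Walk.support_eq_cons ((penWalk (G := G) b (m'-1) (mlt hm)).reverse)] at h3
  simp only [List.filterMap_cons, origOf_inl] at h3
  have h4 := List.tail_eq_of_cons_eq h3
  rw [h2, h4, List.append_nil, List.singleton_append, ← Walk.support_eq_cons]

lemma gm_connected (hG : G.Connected) (hm : 0 < m') : (Gm G m').Connected := by
  have hne : Nonempty V := hG.nonempty
  haveI : Nonempty (VmT G m') := ⟨Sum.inl (Classical.arbitrary V)⟩
  have key : ∀ z : VmT G m', ∃ v : V, (Gm G m').Reachable z (Sum.inl v) := by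
    rintro (v | ⟨v, j⟩ | ⟨e, j⟩)
    · exact ⟨v, Reachable.refl _⟩
    · obtain ⟨jv, hjv⟩ := j
      exact ⟨v, (penWalk v jv hjv).reachable⟩
    · obtain ⟨jv, hjv⟩ := j
      exact ⟨e.val.2, (laneUp e (m'-1-jv) jv (by omega)).reachable⟩
  constructor
  intro x y
  obtain ⟨v, hv⟩ := key x
  obtain ⟨w, hw⟩ := key y
  have hvw : (Gm G m').Reachable (Sum.inl v) (Sum.inl w) := by
    obtain ⟨q⟩ := hG.preconnected v w
    exact (liftWalk hm q).reachable
  exact hv.trans (hvw.trans hw.symm)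
lemma walk_eq_of_support_eq {W' : Type} {H : SimpleGraph W'} :
    ∀ {u v : W'} (p q : H.Walk u v), p.support = q.support → p = q := by
  intro u v p
  induction p with
  | nil =>
    intro q h
    have h1 : q.support.length = 1 := by rw [← h]; simp
    rw [Walk.length_support] at h1
    have hq0 : q.length = 0 := by omega
    exact (Walk.nil_iff_eq_nil.mp (Walk.length_eq_zero_iff.mp hq0)).symm
  | cons h p' ih =>
    intro q hq
    cases q with
    | nil =>
      exfalso
      have h1 := congrArg List.length hq
      rw [Walk.length_support, Walk.length_support] at h1
      simp [Walk.length_cons] at h1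
    | cons h' q' =>
      rename_i w'
      simp only [Walk.support_cons, List.cons.injEq, true_and] at hq
      have hb : p'.support.head? = q'.support.head? := by rw [hq]
      rw [Walk.support_eq_cons p', Walk.support_eq_cons q'] at hb
      simp only [List.head?_cons, Option.some.injEq] at hb
      subst hb
      rw [ih q' hq]
lemma adj_pen {v : V} {j : Fin m'} {z : VmT G m'}
    (h : (Gm G m').Adj (Sum.inr (Sum.inl (v, j))) z) :
    (z = Sum.inl v ∧ (j : ℕ) = 0) ∨
    (∃ i : Fin m', (i : ℕ) = (j : ℕ) + 1 ∧ z = Sum.inr (Sum.inl (v, i))) ∨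
    (∃ i : Fin m', (j : ℕ) = (i : ℕ) + 1 ∧ z = Sum.inr (Sum.inl (v, i))) := by
  rcases h with h | h
  · cases h with
    | penS v j j' hj => exact Or.inr (Or.inl ⟨_, hj, rfl⟩)
  · cases h with
    | pen0 v j hj => exact Or.inl ⟨rfl, hj⟩
    | penS v j j' hj => exact Or.inr (Or.inr ⟨_, hj, rfl⟩)

lemma adj_lane {e : OEdge G} {j : Fin m'} {z : VmT G m'}
    (h : (Gm G m').Adj (Sum.inr (Sum.inr (e, j))) z) :
    ((j : ℕ) = 0 ∧ z = Sum.inl e.val.1) ∨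
    ((j : ℕ) = m' - 1 ∧ z = Sum.inl e.val.2) ∨
    (∃ i : Fin m', (i : ℕ) = (j : ℕ) + 1 ∧ z = Sum.inr (Sum.inr (e, i))) ∨
    (∃ i : Fin m', (j : ℕ) = (i : ℕ) + 1 ∧ z = Sum.inr (Sum.inr (e, i))) := by
  rcases h with h | h
  · cases h with
    | laneS e j j' hj => exact Or.inr (Or.inr (Or.inl ⟨_, hj, rfl⟩))
    | laneE w e j hw hj => exact Or.inr (Or.inl ⟨hj, by rw [hw]⟩)
  · cases h with
    | lane0 u e j hu hj => exact Or.inl ⟨hj, by rw [hu]⟩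
    | laneS e j j' hj => exact Or.inr (Or.inr (Or.inr ⟨_, hj, rfl⟩))

lemma adj_org {u : V} {z : VmT G m'} (h : (Gm G m').Adj (Sum.inl u) z) :
    (∃ j : Fin m', (j : ℕ) = 0 ∧ z = Sum.inr (Sum.inl (u, j))) ∨
    (∃ (e : OEdge G) (j : Fin m'), e.val.1 = u ∧ (j : ℕ) = 0 ∧ z = Sum.inr (Sum.inr (e, j))) ∨
    (∃ (e : OEdge G) (j : Fin m'), e.val.2 = u ∧ (j : ℕ) = m' - 1 ∧
      z = Sum.inr (Sum.inr (e, j))) := by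
  rcases h with h | h
  · cases h with
    | pen0 v j hj => exact Or.inl ⟨j, hj, rfl⟩
    | lane0 u e j hu hj => exact Or.inr (Or.inl ⟨e, j, hu, hj, rfl⟩)
  · cases h with
    | laneE w e j hw hj => exact Or.inr (Or.inr ⟨e, j, hw, hj, rfl⟩)

/-- A path entering a pendant away from the root is trapped. -/
lemma pend_away : ∀ (fuel : ℕ) {v : V} {j : Fin m'} {y : VmT G m'}
    (W : (Gm G m').Walk (Sum.inr (Sum.inl (v, j))) y), W.IsPath → W.length ≤ fuel →
    ((j : ℕ) = 0 → Sum.inl v ∉ W.support) →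
    (∀ i : Fin m', (j : ℕ) = (i : ℕ) + 1 → Sum.inr (Sum.inl (v, i)) ∉ W.support) →
    W.length ≤ m' - 1 - (j : ℕ) := by
  intro fuel
  induction fuel with
  | zero =>
    intro v j y W _ hlen _ _
    omega
  | succ fuel ih =>
    intro v j y W hW hlen h0 h1
    cases W with
    | nil => simp
    | cons h W' =>
      rename_i z
      rcases adj_pen h with ⟨rfl, hj0⟩ | ⟨i, hi, rfl⟩ | ⟨i, hi, rfl⟩
      · exfalso
        refine h0 hj0 ?_
        rw [Walk.support_cons]
        exact List.mem_cons_of_mem _ (Walk.start_mem_support W')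
      · rw [Walk.cons_isPath_iff] at hW
        have hlen' : W'.length ≤ fuel := by
          simp only [Walk.length_cons] at hlen; omega
        have hrec := ih W' hW.1 hlen' (fun hi0 => absurd hi0 (by omega)) ?_
        · have hilt : (i : ℕ) < m' := i.isLt
          simp only [Walk.length_cons]
          omega
        · intro i' hi'
          have hij : i' = j := Fin.ext (by omega)
          rw [hij]
          exact hW.2
      · exfalso
        refine h1 i hi ?_
        rw [Walk.support_cons]
        exact List.mem_cons_of_mem _ (Walk.start_mem_support W')
/-- A path entering a lane from the `e.val.1` side: it either stays inside the
lane, or exits at `e.val.2`. -/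
lemma lane_up : ∀ (fuel : ℕ) {e : OEdge G} {j : Fin m'} {y : VmT G m'}
    (W : (Gm G m').Walk (Sum.inr (Sum.inr (e, j))) y), W.IsPath → W.length ≤ fuel →
    ((j : ℕ) = 0 → Sum.inl e.val.1 ∉ W.support) →
    (∀ i : Fin m', (j : ℕ) = (i : ℕ) + 1 → Sum.inr (Sum.inr (e, i)) ∉ W.support) →
    W.length ≤ m' - 1 - (j : ℕ) ∨
    ∃ W₂ : (Gm G m').Walk (Sum.inl e.val.2) y, W₂.IsPath ∧
      W.length = (m' - (j : ℕ)) + W₂.length ∧ (∀ z ∈ W₂.support, z ∈ W.support) := by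
  intro fuel
  induction fuel with
  | zero =>
    intro e j y W _ hlen _ _
    left; omega
  | succ fuel ih =>
    intro e j y W hW hlen h0 h1
    cases W with
    | nil => left; simp
    | cons h W' =>
      rename_i z
      rw [Walk.cons_isPath_iff] at hW
      have hlen' : W'.length ≤ fuel := by
        simp only [Walk.length_cons] at hlen; omega
      rcases adj_lane h with ⟨hj0, rfl⟩ | ⟨hjE, rfl⟩ | ⟨i, hi, rfl⟩ | ⟨i, hi, rfl⟩
      · exfalso
        refine h0 hj0 ?_
        rw [Walk.support_cons]
        exact List.mem_cons_of_mem _ (Walk.start_mem_support W')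
      · right
        refine ⟨W', hW.1, ?_, ?_⟩
        · have : (j : ℕ) < m' := j.isLt
          simp only [Walk.length_cons]
          omega
        · intro z hz
          rw [Walk.support_cons]
          exact List.mem_cons_of_mem _ hz
      · have hrec := ih W' hW.1 hlen' (fun hi0 => absurd hi0 (by omega)) ?_
        · have hilt : (i : ℕ) < m' := i.isLt
          rcases hrec with hrec | ⟨W₂, hp2, hl2, hs2⟩
          · left
            simp only [Walk.length_cons]
            omega
          · right
            refine ⟨W₂, hp2, ?_, ?_⟩
            · simp only [Walk.length_cons]
              omega
            · intro z hz
              rw [Walk.support_cons]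
              exact List.mem_cons_of_mem _ (hs2 z hz)
        · intro i' hi'
          have hij : i' = j := Fin.ext (by omega)
          rw [hij]
          exact hW.2
      · exfalso
        refine h1 i hi ?_
        rw [Walk.support_cons]
        exact List.mem_cons_of_mem _ (Walk.start_mem_support W')

/-- A path entering a lane from the `e.val.2` side: it either stays inside the
lane, or exits at `e.val.1`. -/
lemma lane_down : ∀ (fuel : ℕ) {e : OEdge G} {j : Fin m'} {y : VmT G m'}
    (W : (Gm G m').Walk (Sum.inr (Sum.inr (e, j))) y), W.IsPath → W.length ≤ fuel →
    ((j : ℕ) = m' - 1 → Sum.inl e.val.2 ∉ W.support) →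
    (∀ i : Fin m', (i : ℕ) = (j : ℕ) + 1 → Sum.inr (Sum.inr (e, i)) ∉ W.support) →
    W.length ≤ (j : ℕ) ∨
    ∃ W₂ : (Gm G m').Walk (Sum.inl e.val.1) y, W₂.IsPath ∧
      W.length = (j : ℕ) + 1 + W₂.length ∧ (∀ z ∈ W₂.support, z ∈ W.support) := by
  intro fuel
  induction fuel with
  | zero =>
    intro e j y W _ hlen _ _
    left; omega
  | succ fuel ih =>
    intro e j y W hW hlen hE h1
    cases W with
    | nil => left; simp
    | cons h W' =>
      rename_i z
      rw [Walk.cons_isPath_iff] at hW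
      have hlen' : W'.length ≤ fuel := by
        simp only [Walk.length_cons] at hlen; omega
      rcases adj_lane h with ⟨hj0, rfl⟩ | ⟨hjE, rfl⟩ | ⟨i, hi, rfl⟩ | ⟨i, hi, rfl⟩
      · right
        refine ⟨W', hW.1, by simp only [Walk.length_cons]; omega, ?_⟩
        intro z hz
        rw [Walk.support_cons]
        exact List.mem_cons_of_mem _ hz
      · exfalso
        refine hE hjE ?_
        rw [Walk.support_cons]
        exact List.mem_cons_of_mem _ (Walk.start_mem_support W')
      · exfalso
        refine h1 i hi ?_
        rw [Walk.support_cons]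
        exact List.mem_cons_of_mem _ (Walk.start_mem_support W')
      · have hrec := ih W' hW.1 hlen'
          (fun hiE => absurd hiE (by have := j.isLt; omega)) ?_
        · rcases hrec with hrec | ⟨W₂, hp2, hl2, hs2⟩
          · left
            simp only [Walk.length_cons]
            omega
          · right
            refine ⟨W₂, hp2, ?_, ?_⟩
            · simp only [Walk.length_cons]
              omega
            · intro z hz
              rw [Walk.support_cons]
              exact List.mem_cons_of_mem _ (hs2 z hz)
        · intro i' hi'
          have hij : i' = j := Fin.ext (by omega)
          rw [hij]
          exact hW.2
/-- Main structural lemma: a path in `Gm` starting at an original vertex projects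
to a path `Q` in `G`, with length at most `(m'+1) * Q.length + m'`. -/
lemma main_org : ∀ (fuel : ℕ) {u : V} {y : VmT G m'}
    (W : (Gm G m').Walk (Sum.inl u) y), W.IsPath → W.length ≤ fuel →
    ∃ (b : V) (Q : G.Walk u b), Q.IsPath ∧
      (∀ v ∈ Q.support, Sum.inl v ∈ W.support) ∧
      W.length ≤ (m' + 1) * Q.length + m' := by
  intro fuel
  induction fuel with
  | zero =>
    intro u y W hW hlen
    refine ⟨u, Walk.nil, Walk.IsPath.nil, ?_, ?_⟩
    · intro v hv
      simp only [Walk.support_nil, List.mem_singleton] at hv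
      rw [hv]
      exact Walk.start_mem_support W
    · omega
  | succ fuel ih =>
    intro u y W hW hlen
    cases W with
    | nil =>
      refine ⟨u, Walk.nil, Walk.IsPath.nil, ?_, by simp⟩
      intro v hv
      simp only [Walk.support_nil, List.mem_singleton] at hv
      rw [hv]; simp
    | cons h W' =>
      rename_i z
      rw [Walk.cons_isPath_iff] at hW
      have hlen' : W'.length ≤ fuel := by
        simp only [Walk.length_cons] at hlen; omega
      rcases adj_org h with ⟨j, hj0, rfl⟩ | ⟨e, j, he, hj0, rfl⟩ | ⟨e, j, he, hjE, rfl⟩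
      · -- pendant: dead end
        have hb := pend_away W'.length W' hW.1 le_rfl
          (fun _ => hW.2) (fun i hi => absurd hi (by omega))
        refine ⟨u, Walk.nil, Walk.IsPath.nil, ?_, ?_⟩
        · intro v hv
          simp only [Walk.support_nil, List.mem_singleton] at hv
          rw [hv]
          exact Walk.start_mem_support _
        · simp only [Walk.length_cons, Walk.length_nil]
          have : (j : ℕ) < m' := j.isLt
          omega
      · -- lane entered at the e.val.1 end
        subst he
        have hb := lane_up W'.length W' hW.1 le_rfl (fun _ => hW.2)
          (fun i hi => absurd hi (by omega))
        rcases hb with hb | ⟨W₂, hp2, hl2, hs2⟩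
        · refine ⟨_, Walk.nil, Walk.IsPath.nil, ?_, ?_⟩
          · intro v hv
            simp only [Walk.support_nil, List.mem_singleton] at hv
            rw [hv]
            exact Walk.start_mem_support _
          · simp only [Walk.length_cons, Walk.length_nil]
            omega
        · have hlen2 : W₂.length ≤ fuel := by omega
          obtain ⟨b, Q, hQ, hQs, hQl⟩ := ih W₂ hp2 hlen2
          have hadj : G.Adj e.val.1 e.val.2 := e.prop
          have hu : e.val.1 ∉ Q.support := by
            intro hu
            exact hW.2 (hs2 _ (hQs _ hu))
          refine ⟨b, Walk.cons hadj Q, hQ.cons hu, ?_, ?_⟩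
          · intro v hv
            rw [Walk.support_cons, List.mem_cons] at hv
            rcases hv with rfl | hv
            · exact Walk.start_mem_support _
            · rw [Walk.support_cons]
              exact List.mem_cons_of_mem _ (hs2 _ (hQs _ hv))
          · simp only [Walk.length_cons]
            have := j.isLt
            rw [Nat.mul_add, Nat.mul_one]
            omega
      · -- lane entered at the e.val.2 end
        subst he
        have hb := lane_down W'.length W' hW.1 le_rfl (fun _ => hW.2)
          (fun i hi => absurd hi (by have := i.isLt; omega))
        rcases hb with hb | ⟨W₂, hp2, hl2, hs2⟩
        · refine ⟨_, Walk.nil, Walk.IsPath.nil, ?_, ?_⟩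
          · intro v hv
            simp only [Walk.support_nil, List.mem_singleton] at hv
            rw [hv]
            exact Walk.start_mem_support _
          · simp only [Walk.length_cons, Walk.length_nil]
            have := j.isLt
            omega
        · have hlen2 : W₂.length ≤ fuel := by
            have := j.isLt
            omega
          obtain ⟨b, Q, hQ, hQs, hQl⟩ := ih W₂ hp2 hlen2
          have hadj : G.Adj e.val.2 e.val.1 := e.prop.symm
          have hu : e.val.2 ∉ Q.support := by
            intro hu
            exact hW.2 (hs2 _ (hQs _ hu))
          refine ⟨b, Walk.cons hadj Q, hQ.cons hu, ?_, ?_⟩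
          · intro v hv
            rw [Walk.support_cons, List.mem_cons] at hv
            rcases hv with rfl | hv
            · exact Walk.start_mem_support _
            · rw [Walk.support_cons]
              exact List.mem_cons_of_mem _ (hs2 _ (hQs _ hv))
          · simp only [Walk.length_cons]
            have := j.isLt
            rw [Nat.mul_add, Nat.mul_one]
            omega
lemma confined_pen : ∀ {x y : VmT G m'} (W : (Gm G m').Walk x y) (v : V) (j : Fin m'),
    x = Sum.inr (Sum.inl (v, j)) → (∀ w : V, Sum.inl w ∉ W.support) →
    ∀ z ∈ W.support, ∃ i : Fin m', z = Sum.inr (Sum.inl (v, i)) := by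
  intro x y W
  induction W with
  | nil =>
    rintro v j rfl hno z hz
    simp only [Walk.support_nil, List.mem_singleton] at hz
    exact ⟨j, hz⟩
  | cons h W' ih =>
    rintro v j rfl hno z hz
    rw [Walk.support_cons, List.mem_cons] at hz
    rcases hz with rfl | hz
    · exact ⟨j, rfl⟩
    · rcases adj_pen h with ⟨rfl, _⟩ | ⟨i, hi, he⟩ | ⟨i, hi, he⟩
      · exact absurd (Walk.start_mem_support W') (by
          intro hc
          exact hno _ (by rw [Walk.support_cons]; exact List.mem_cons_of_mem _ hc))
      · exact ih v i he (fun w hw => hno w (by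
          rw [Walk.support_cons]; exact List.mem_cons_of_mem _ hw)) z hz
      · exact ih v i he (fun w hw => hno w (by
          rw [Walk.support_cons]; exact List.mem_cons_of_mem _ hw)) z hz

lemma confined_lane : ∀ {x y : VmT G m'} (W : (Gm G m').Walk x y) (e : OEdge G) (j : Fin m'),
    x = Sum.inr (Sum.inr (e, j)) → (∀ w : V, Sum.inl w ∉ W.support) →
    ∀ z ∈ W.support, ∃ i : Fin m', z = Sum.inr (Sum.inr (e, i)) := by
  intro x y W
  induction W with
  | nil =>
    rintro e j rfl hno z hz
    simp only [Walk.support_nil, List.mem_singleton] at hz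
    exact ⟨j, hz⟩
  | cons h W' ih =>
    rintro e j rfl hno z hz
    rw [Walk.support_cons, List.mem_cons] at hz
    rcases hz with rfl | hz
    · exact ⟨j, rfl⟩
    · have hno' : ∀ w : V, Sum.inl w ∉ W'.support := fun w hw => hno w (by
        rw [Walk.support_cons]; exact List.mem_cons_of_mem _ hw)
      rcases adj_lane h with ⟨_, rfl⟩ | ⟨_, rfl⟩ | ⟨i, hi, he⟩ | ⟨i, hi, he⟩
      · exact absurd (Walk.start_mem_support W') (hno' _)
      · exact absurd (Walk.start_mem_support W') (hno' _)
      · exact ih e i he hno' z hz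
      · exact ih e i he hno' z hz

lemma nat_list_bound {l : List ℕ} {n : ℕ} (hd : l.Nodup) (hb : ∀ x ∈ l, x < n) :
    l.length ≤ n := by
  have h1 : l.toFinset ⊆ Finset.range n := by
    intro x hx
    rw [List.mem_toFinset] at hx
    rw [Finset.mem_range]
    exact hb x hx
  have h2 := Finset.card_le_card h1
  rwa [List.toFinset_card_of_nodup hd, Finset.card_range] at h2

/-- index extraction -/
def idxOf : VmT G m' → ℕ
  | Sum.inl _ => 0
  | Sum.inr (Sum.inl (_, j)) => (j : ℕ)
  | Sum.inr (Sum.inr (_, j)) => (j : ℕ)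

lemma no_orig_bound {x y : VmT G m'} (W : (Gm G m').Walk x y) (hW : W.IsPath)
    (hno : ∀ w : V, Sum.inl w ∉ W.support) : W.length ≤ m' := by
  have hnodup : W.support.Nodup := (Walk.isPath_def _).mp hW
  have hkey : ∃ f : VmT G m' → Prop, (∀ z ∈ W.support, f z) ∧
      (∀ z z', f z → f z' → idxOf z = idxOf z' → z = z') := by
    rcases x with v | ⟨v, j⟩ | ⟨e, j⟩
    · exact absurd (Walk.start_mem_support W) (hno v)
    · refine ⟨fun z => ∃ i : Fin m', z = Sum.inr (Sum.inl (v, i)), ?_, ?_⟩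
      · exact confined_pen W v j rfl hno
      · rintro z z' ⟨i, rfl⟩ ⟨i', rfl⟩ hii
        simp only [idxOf] at hii
        rw [Fin.ext hii]
    · refine ⟨fun z => ∃ i : Fin m', z = Sum.inr (Sum.inr (e, i)), ?_, ?_⟩
      · exact confined_lane W e j rfl hno
      · rintro z z' ⟨i, rfl⟩ ⟨i', rfl⟩ hii
        simp only [idxOf] at hii
        rw [Fin.ext hii]
  obtain ⟨f, hf, hinj⟩ := hkey
  have hmapnodup : (W.support.map idxOf).Nodup :=
    hnodup.map_on (fun z hz z' hz' h => hinj z z' (hf z hz) (hf z' hz') h)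
  have hlt : ∀ x' ∈ W.support.map idxOf, x' < m' := by
    intro x' hx'
    rw [List.mem_map] at hx'
    obtain ⟨z, hz, rfl⟩ := hx'
    rcases x with v | _ | _
    · exact absurd (Walk.start_mem_support W) (hno v)
    all_goals {
      obtain ⟨i, rfl⟩ : ∃ i, _ := by
        first
        | exact confined_pen W _ _ rfl hno z hz
        | exact confined_lane W _ _ rfl hno z hz
      exact i.isLt
    }
  have := nat_list_bound hmapnodup hlt
  rw [List.length_map, Walk.length_support] at this
  omega

lemma first_split : ∀ {x y : VmT G m'} (W : (Gm G m').Walk x y),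
    (∃ w : V, Sum.inl w ∈ W.support) →
    ∃ (u₀ : V) (W₁ : (Gm G m').Walk x (Sum.inl u₀)) (W₂ : (Gm G m').Walk (Sum.inl u₀) y),
      W = W₁.append W₂ ∧ (∀ w : V, Sum.inl w ∈ W₁.support → w = u₀) := by
  intro x y W
  induction W with
  | nil =>
    rintro ⟨w, hw⟩
    simp only [Walk.support_nil, List.mem_singleton] at hw
    subst hw
    exact ⟨w, Walk.nil, Walk.nil, rfl, by simp⟩
  | cons h W' ih =>
    rename_i xx zz yy
    intro hex
    by_cases hx : ∃ u : V, xx = Sum.inl u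
    · obtain ⟨u, rfl⟩ := hx
      exact ⟨u, Walk.nil, Walk.cons h W', rfl, by simp⟩
    · have hex' : ∃ w : V, Sum.inl w ∈ W'.support := by
        obtain ⟨w, hw⟩ := hex
        rw [Walk.support_cons, List.mem_cons] at hw
        rcases hw with hw | hw
        · exact absurd ⟨w, hw.symm⟩ hx
        · exact ⟨w, hw⟩
      obtain ⟨u₀, W₁, W₂, rfl, hW₁⟩ := ih hex'
      refine ⟨u₀, Walk.cons h W₁, W₂, rfl, ?_⟩
      intro w hw
      rw [Walk.support_cons, List.mem_cons] at hw
      rcases hw with hw | hw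
      · exact absurd ⟨w, hw.symm⟩ hx
      · exact hW₁ w hw
lemma all_eq_length_le_one {α : Type*} {l : List α} {c : α} (hd : l.Nodup)
    (hall : ∀ v ∈ l, v = c) : l.length ≤ 1 := by
  match l with
  | [] => simp
  | [x] => simp
  | x :: y :: t =>
    exfalso
    have hx : x = c := hall x (by simp)
    have hy : y = c := hall y (by simp)
    rw [List.nodup_cons] at hd
    exact hd.1 (by rw [hx, hy]; simp)

lemma length_le_max {V' : Type} [Fintype V'] {H : SimpleGraph V'} {a b : V'} {q : H.Walk a b}
    (hq : q.IsPath) : q.length ≤ maxPathLength H := by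
  apply le_csSup
  · refine ⟨Fintype.card V', ?_⟩
    rintro n ⟨a', b', q', hq', rfl⟩
    have h1 := ((Walk.isPath_def _).mp hq').length_le_card
    rw [Walk.length_support] at h1
    omega
  · exact ⟨a, b, q, hq, rfl⟩

lemma gen_bound [Fintype V] (hm : 0 < m') {x y : VmT G m'} (W : (Gm G m').Walk x y)
    (hW : W.IsPath) : W.length ≤ (m' + 1) * maxPathLength G + 2 * m' := by
  rcases Classical.em (∃ w : V, Sum.inl w ∈ W.support) with hor | hor
  · obtain ⟨u₀, W₁, W₂, rfl, hW₁⟩ := first_split _ hor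
    have hW1p : W₁.IsPath := hW.of_append_left
    have hW2p : W₂.IsPath := hW.of_append_right
    obtain ⟨b, Q, hQ, _, hQl⟩ := main_org W₂.length W₂ hW2p le_rfl
    have hQle : Q.length ≤ maxPathLength G := length_le_max hQ
    obtain ⟨b', Q', hQ', hQs', hQl'⟩ := main_org W₁.reverse.length W₁.reverse hW1p.reverse le_rfl
    have hQ'0 : Q'.length = 0 := by
      have hall : ∀ v ∈ Q'.support, v = u₀ := by
        intro v hv
        have h2 := hQs' v hv
        rw [Walk.support_reverse, List.mem_reverse] at h2
        exact hW₁ v h2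
      have hnodup := (Walk.isPath_def _).mp hQ'
      have h3 := all_eq_length_le_one hnodup hall
      rw [Walk.length_support] at h3
      omega
    have hW1len : W₁.length ≤ m' := by
      rw [hQ'0] at hQl'
      rw [Walk.length_reverse] at hQl'
      simpa using hQl'
    rw [Walk.length_append]
    have hmul : (m' + 1) * Q.length ≤ (m' + 1) * maxPathLength G :=
      Nat.mul_le_mul_left _ hQle
    generalize hX : (m' + 1) * maxPathLength G = X at *
    generalize (m' + 1) * Q.length = Y at *
    omega
  · push_neg at hor
    have h1 := no_orig_bound W hW hor
    generalize (m' + 1) * maxPathLength G = X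
    omega

noncomputable instance fintypeVmT [Fintype V] : Fintype (VmT G m') := Fintype.ofFinite _

lemma maxPathLength_Gm_eq [Fintype V] (hm : 0 < m') {a b : V} {p : G.Walk a b}
    (hp : IsLongestPath G p) (hab : a ≠ b) :
    maxPathLength (Gm G m') = (m' + 1) * maxPathLength G + 2 * m' := by
  apply le_antisymm
  · apply csSup_le
    · exact ⟨(pathM (G := G) hm p).length, _, _, pathM hm p, isPath_pathM hm hp.1 hab, rfl⟩
    · rintro n ⟨a', b', q', hq', rfl⟩
      exact gen_bound hm q' hq'
  · apply le_csSup
    · refine ⟨(m' + 1) * maxPathLength G + 2 * m', ?_⟩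
      rintro n ⟨a', b', q', hq', rfl⟩
      exact gen_bound hm q' hq'
    · exact ⟨_, _, pathM hm p, isPath_pathM hm hp.1 hab, by rw [length_pathM, hp.2]⟩

lemma isLongest_pathM [Fintype V] (hm : 0 < m') {a b : V} {p : G.Walk a b}
    (hp : IsLongestPath G p) (hab : a ≠ b) :
    IsLongestPath (Gm G m') (pathM (G := G) hm p) := by
  refine ⟨isPath_pathM hm hp.1 hab, ?_⟩
  rw [length_pathM, hp.2, maxPathLength_Gm_eq hm hp hab]
lemma mem_walkVerts {a b x : V} {p : G.Walk a b} : x ∈ walkVerts p ↔ x ∈ p.support := Iff.rfl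

lemma walkVerts_nonempty {a b : V} (p : G.Walk a b) : (walkVerts p).Nonempty :=
  ⟨a, Walk.start_mem_support p⟩

lemma distToSet_zero {x : V} {U : Set V} (hx : x ∈ U) : distToSet G x U = 0 :=
  Nat.sInf_eq_zero.mpr (Or.inl ⟨x, hx, SimpleGraph.dist_self⟩)

lemma distToSet_le {x t : V} {U : Set V} (ht : t ∈ U) : distToSet G x U ≤ G.dist x t :=
  Nat.sInf_le ⟨t, ht, rfl⟩

lemma distToSet_lip (hG : G.Connected) {x y : V} (hxy : G.Adj x y) {U : Set V}
    (hU : U.Nonempty) : distToSet G x U ≤ distToSet G y U + 1 := by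
  have himg : (G.dist y '' U).Nonempty := hU.image _
  obtain ⟨t, ht, hdt⟩ := Nat.sInf_mem himg
  have h1 : distToSet G x U ≤ G.dist x t := distToSet_le ht
  have h2 : G.dist x t ≤ G.dist x y + G.dist y t := hG.dist_triangle
  have h3 : G.dist x y = 1 := dist_eq_one_iff_adj.mpr hxy
  have h4 : distToSet G y U = G.dist y t := hdt.symm
  omega

open Classical in
/-- The potential function: a 1-Lipschitz lower bound on the distance to
`walkVerts (pathM hm p)` in `Gm`. -/
noncomputable def hF {a b : V} (p : G.Walk a b) : VmT G m' → ℕ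
  | Sum.inl x => (m' + 1) * distToSet G x (walkVerts p)
  | Sum.inr (Sum.inl (x, _)) => (m' + 1) * distToSet G x (walkVerts p)
  | Sum.inr (Sum.inr (e, j)) =>
      if (∃ d ∈ p.darts, d.toProd = e.val) then 0
      else min (((j : ℕ) + 1) + (m' + 1) * distToSet G e.val.1 (walkVerts p))
               ((m' - (j : ℕ)) + (m' + 1) * distToSet G e.val.2 (walkVerts p))

@[simp] lemma hF_inl {a b : V} (p : G.Walk a b) (x : V) :
    hF (G := G) (m' := m') p (Sum.inl x) = (m' + 1) * distToSet G x (walkVerts p) := rfl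

@[simp] lemma hF_pen {a b : V} (p : G.Walk a b) (x : V) (j : Fin m') :
    hF (G := G) p (Sum.inr (Sum.inl (x, j))) = (m' + 1) * distToSet G x (walkVerts p) := rfl

lemma cond_ends {a b : V} {p : G.Walk a b} {e : OEdge G}
    (hc : ∃ d ∈ p.darts, d.toProd = e.val) :
    e.val.1 ∈ p.support ∧ e.val.2 ∈ p.support := by
  obtain ⟨d, hd, hde⟩ := hc
  constructor
  · have := Walk.dart_fst_mem_support_of_mem_darts _ hd
    rwa [hde] at this
  · have := Walk.dart_snd_mem_support_of_mem_darts _ hd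
    rwa [hde] at this

lemma hF_lane_pos {a b : V} {p : G.Walk a b} {e : OEdge G} {j : Fin m'}
    (hc : ∃ d ∈ p.darts, d.toProd = e.val) :
    hF (G := G) p (Sum.inr (Sum.inr (e, j))) = 0 := by
  simp only [hF]
  rw [if_pos hc]

lemma hF_lane_neg {a b : V} {p : G.Walk a b} {e : OEdge G} {j : Fin m'}
    (hc : ¬ ∃ d ∈ p.darts, d.toProd = e.val) :
    hF (G := G) p (Sum.inr (Sum.inr (e, j))) =
      min (((j : ℕ) + 1) + (m' + 1) * distToSet G e.val.1 (walkVerts p))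
          ((m' - (j : ℕ)) + (m' + 1) * distToSet G e.val.2 (walkVerts p)) := by
  simp only [hF]
  rw [if_neg hc]

lemma hF_zero (hm : 0 < m') {a b : V} {p : G.Walk a b} {z : VmT G m'}
    (hz : z ∈ (pathM (G := G) hm p).support) : hF p z = 0 := by
  rw [support_pathM] at hz
  rcases List.mem_append.mp hz with hz | hz
  · rw [mem_support_penWalk] at hz
    rcases hz with ⟨i, _, rfl⟩ | rfl
    · rw [hF_pen, distToSet_zero (mem_walkVerts.mpr (Walk.start_mem_support p)), Nat.mul_zero]
    · rw [hF_inl, distToSet_zero (mem_walkVerts.mpr (Walk.start_mem_support p)), Nat.mul_zero]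
  rcases List.mem_append.mp hz with hz | hz
  · have hz' := List.mem_of_mem_tail hz
    rcases z with x | ⟨x, i⟩ | ⟨e, i⟩
    · rw [hF_inl, distToSet_zero (mem_walkVerts.mpr (mem_liftWalk_orig.mp hz')), Nat.mul_zero]
    · exact absurd hz' mem_liftWalk_pen
    · exact hF_lane_pos (mem_liftWalk_lane hz')
  · obtain ⟨i, rfl⟩ := mem_penBrev_tail hm hz
    rw [hF_pen, distToSet_zero (mem_walkVerts.mpr (Walk.end_mem_support p)), Nat.mul_zero]

lemma hF_lip (hG : G.Connected) {a b : V} {p : G.Walk a b} {x y : VmT G m'}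
    (hxy : (Gm G m').Adj x y) : hF p x ≤ hF p y + 1 := by
  have hUne := walkVerts_nonempty p
  have hlip1 : distToSet G a (walkVerts p) = 0 := distToSet_zero (mem_walkVerts.mpr (Walk.start_mem_support p))
  rcases hxy with h | h
  · cases h with
    | pen0 v j hj => simp
    | penS v j j' hj => simp
    | lane0 u e j hu hj =>
      subst hu
      by_cases hc : ∃ d ∈ p.darts, d.toProd = e.val
      · rw [hF_lane_pos hc]
        rw [hF_inl, distToSet_zero (mem_walkVerts.mpr (cond_ends hc).1), Nat.mul_zero]
        exact Nat.zero_le _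
      · rw [hF_inl, hF_lane_neg hc]
        have hd := distToSet_lip hG e.prop hUne
        have hmul := Nat.mul_le_mul_left (m' + 1) hd
        rw [Nat.mul_add, Nat.mul_one] at hmul
        have hjlt := j.isLt
        generalize (m' + 1) * distToSet G e.val.1 (walkVerts p) = A' at *
        generalize (m' + 1) * distToSet G e.val.2 (walkVerts p) = B' at *
        omega
    | laneS e j j' hj =>
      by_cases hc : ∃ d ∈ p.darts, d.toProd = e.val
      · rw [hF_lane_pos hc, hF_lane_pos hc]
        exact Nat.zero_le _
      · rw [hF_lane_neg hc, hF_lane_neg hc]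
        generalize (m' + 1) * distToSet G e.val.1 (walkVerts p) = A'
        generalize (m' + 1) * distToSet G e.val.2 (walkVerts p) = B'
        have hjlt := j'.isLt
        omega
    | laneE w e j hw hj =>
      subst hw
      by_cases hc : ∃ d ∈ p.darts, d.toProd = e.val
      · rw [hF_lane_pos hc]
        exact Nat.zero_le _
      · rw [hF_inl, hF_lane_neg hc]
        have h2 := min_le_right (((j : ℕ) + 1) + (m' + 1) * distToSet G e.val.1 (walkVerts p))
          ((m' - (j : ℕ)) + (m' + 1) * distToSet G e.val.2 (walkVerts p))
        generalize (m' + 1) * distToSet G e.val.1 (walkVerts p) = A' at *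
        generalize (m' + 1) * distToSet G e.val.2 (walkVerts p) = B' at *
        have hjlt := j.isLt
        omega
  · cases h with
    | pen0 v j hj => simp
    | penS v j j' hj => simp
    | lane0 u e j hu hj =>
      subst hu
      by_cases hc : ∃ d ∈ p.darts, d.toProd = e.val
      · rw [hF_lane_pos hc]
        exact Nat.zero_le _
      · rw [hF_inl, hF_lane_neg hc]
        have h2 := min_le_left (((j : ℕ) + 1) + (m' + 1) * distToSet G e.val.1 (walkVerts p))
          ((m' - (j : ℕ)) + (m' + 1) * distToSet G e.val.2 (walkVerts p))
        generalize (m' + 1) * distToSet G e.val.1 (walkVerts p) = A' at *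
        generalize (m' + 1) * distToSet G e.val.2 (walkVerts p) = B' at *
        omega
    | laneS e j j' hj =>
      by_cases hc : ∃ d ∈ p.darts, d.toProd = e.val
      · rw [hF_lane_pos hc, hF_lane_pos hc]
        exact Nat.zero_le _
      · rw [hF_lane_neg hc, hF_lane_neg hc]
        generalize (m' + 1) * distToSet G e.val.1 (walkVerts p) = A'
        generalize (m' + 1) * distToSet G e.val.2 (walkVerts p) = B'
        have hjlt := j'.isLt
        omega
    | laneE w e j hw hj =>
      subst hw
      by_cases hc : ∃ d ∈ p.darts, d.toProd = e.val
      · rw [hF_lane_pos hc]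
        rw [hF_inl, distToSet_zero (mem_walkVerts.mpr (cond_ends hc).2), Nat.mul_zero]
        exact Nat.zero_le _
      · rw [hF_inl, hF_lane_neg hc]
        have hd := distToSet_lip hG e.prop.symm hUne
        have hmul := Nat.mul_le_mul_left (m' + 1) hd
        rw [Nat.mul_add, Nat.mul_one] at hmul
        have hjlt := j.isLt
        generalize (m' + 1) * distToSet G e.val.1 (walkVerts p) = A' at *
        generalize (m' + 1) * distToSet G e.val.2 (walkVerts p) = B' at *
        omega

lemma hF_walk (hG : G.Connected) {a b : V} {p : G.Walk a b} {x y : VmT G m'}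
    (W : (Gm G m').Walk x y) : hF p x ≤ hF p y + W.length := by
  induction W with
  | nil => simp
  | cons h W' ih =>
    have h1 := hF_lip (p := p) hG h
    simp only [Walk.length_cons]
    omega

lemma hF_le_distToSet (hG : G.Connected) (hm : 0 < m') {a b : V} {p : G.Walk a b}
    (z : VmT G m') :
    hF p z ≤ distToSet (Gm G m') z (walkVerts (pathM (G := G) hm p)) := by
  have hconn := gm_connected hG hm
  apply le_csInf ((walkVerts_nonempty (pathM (G := G) hm p)).image _)
  rintro n ⟨t, ht, rfl⟩
  obtain ⟨W, hW⟩ := hconn.exists_walk_length_eq_dist z t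
  have h1 := hF_walk (p := p) hG W
  rw [hF_zero hm ht] at h1
  omega
lemma arith3 (a c m k A1 A2 A3 B1 B2 B3 T1 T2 T3 : ℕ)
    (hac : a + c = m)
    (hA : m * k ≤ A1 + A2 + A3) (hB : m * k ≤ B1 + B2 + B3)
    (hab1 : A1 ≤ B1 + m) (hba1 : B1 ≤ A1 + m)
    (hab2 : A2 ≤ B2 + m) (hba2 : B2 ≤ A2 + m)
    (hab3 : A3 ≤ B3 + m) (hba3 : B3 ≤ A3 + m)
    (h1 : (T1 = 0 ∧ A1 = 0 ∧ B1 = 0) ∨ T1 = min (a + A1) (c + B1))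
    (h2 : (T2 = 0 ∧ A2 = 0 ∧ B2 = 0) ∨ T2 = min (a + A2) (c + B2))
    (h3 : (T3 = 0 ∧ A3 = 0 ∧ B3 = 0) ∨ T3 = min (a + A3) (c + B3)) :
    m * k ≤ T1 + T2 + T3 := by
  generalize m * k = M at hA hB ⊢
  rcases h1 with ⟨e1, f1, g1⟩ | h1 <;> rcases h2 with ⟨e2, f2, g2⟩ | h2 <;>
    rcases h3 with ⟨e3, f3, g3⟩ | h3 <;> omega

lemma hF_lane_cases {a b : V} (p : G.Walk a b) (e : OEdge G) (j : Fin m') :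
    (hF (G := G) p (Sum.inr (Sum.inr (e, j))) = 0 ∧
      (m' + 1) * distToSet G e.val.1 (walkVerts p) = 0 ∧
      (m' + 1) * distToSet G e.val.2 (walkVerts p) = 0) ∨
    hF (G := G) p (Sum.inr (Sum.inr (e, j))) =
      min (((j : ℕ) + 1) + (m' + 1) * distToSet G e.val.1 (walkVerts p))
          ((m' - (j : ℕ)) + (m' + 1) * distToSet G e.val.2 (walkVerts p)) := by
  by_cases hc : ∃ d ∈ p.darts, d.toProd = e.val
  · left
    refine ⟨hF_lane_pos hc, ?_, ?_⟩
    · rw [distToSet_zero (mem_walkVerts.mpr (cond_ends hc).1), Nat.mul_zero]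
    · rw [distToSet_zero (mem_walkVerts.mpr (cond_ends hc).2), Nat.mul_zero]
  · right
    exact hF_lane_neg hc

lemma sum_hF_ge (hG : G.Connected) {k : ℕ}
    {a₁ b₁ a₂ b₂ a₃ b₃ : V} {p₁ : G.Walk a₁ b₁} {p₂ : G.Walk a₂ b₂} {p₃ : G.Walk a₃ b₃}
    (hk : ∀ x : V, k ≤ distToSet G x (walkVerts p₁) + distToSet G x (walkVerts p₂) +
      distToSet G x (walkVerts p₃))
    (z : VmT G m') :
    (m' + 1) * k ≤ hF (G := G) p₁ z + hF (G := G) p₂ z + hF (G := G) p₃ z := by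
  rcases z with x | ⟨x, j⟩ | ⟨e, j⟩
  · simpa [Nat.mul_add] using Nat.mul_le_mul_left (m' + 1) (hk x)
  · simpa [Nat.mul_add] using Nat.mul_le_mul_left (m' + 1) (hk x)
  · have hUne₁ := walkVerts_nonempty p₁
    have hUne₂ := walkVerts_nonempty p₂
    have hUne₃ := walkVerts_nonempty p₃
    have hA : (m' + 1) * k ≤ (m' + 1) * distToSet G e.val.1 (walkVerts p₁) +
        (m' + 1) * distToSet G e.val.1 (walkVerts p₂) +
        (m' + 1) * distToSet G e.val.1 (walkVerts p₃) := by
      simpa [Nat.mul_add] using Nat.mul_le_mul_left (m' + 1) (hk e.val.1)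
    have hB : (m' + 1) * k ≤ (m' + 1) * distToSet G e.val.2 (walkVerts p₁) +
        (m' + 1) * distToSet G e.val.2 (walkVerts p₂) +
        (m' + 1) * distToSet G e.val.2 (walkVerts p₃) := by
      simpa [Nat.mul_add] using Nat.mul_le_mul_left (m' + 1) (hk e.val.2)
    have hac : ((j : ℕ) + 1) + (m' - (j : ℕ)) = m' + 1 := by
      have := j.isLt; omega
    have lip : ∀ {U : Set V}, U.Nonempty →
        (m' + 1) * distToSet G e.val.1 U ≤ (m' + 1) * distToSet G e.val.2 U + (m' + 1) ∧
        (m' + 1) * distToSet G e.val.2 U ≤ (m' + 1) * distToSet G e.val.1 U + (m' + 1) := by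
      intro U hU
      constructor
      · have := Nat.mul_le_mul_left (m' + 1) (distToSet_lip hG e.prop hU)
        rw [Nat.mul_add, Nat.mul_one] at this
        exact this
      · have := Nat.mul_le_mul_left (m' + 1) (distToSet_lip hG e.prop.symm hU)
        rw [Nat.mul_add, Nat.mul_one] at this
        exact this
    exact arith3 ((j : ℕ) + 1) (m' - (j : ℕ)) (m' + 1) k _ _ _ _ _ _ _ _ _ hac hA hB
      (lip hUne₁).1 (lip hUne₁).2 (lip hUne₂).1 (lip hUne₂).2 (lip hUne₃).1 (lip hUne₃).2
      (hF_lane_cases p₁ e j) (hF_lane_cases p₂ e j) (hF_lane_cases p₃ e j)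

lemma fThree_Gm_ge (hG : G.Connected) (hm : 0 < m') {k : ℕ}
    {a₁ b₁ a₂ b₂ a₃ b₃ : V} {p₁ : G.Walk a₁ b₁} {p₂ : G.Walk a₂ b₂} {p₃ : G.Walk a₃ b₃}
    (hk : ∀ x : V, k ≤ distToSet G x (walkVerts p₁) + distToSet G x (walkVerts p₂) +
      distToSet G x (walkVerts p₃)) :
    (m' + 1) * k ≤ fThree (Gm G m') (pathM (G := G) hm p₁) (pathM (G := G) hm p₂)
      (pathM (G := G) hm p₃) := by
  haveI : Nonempty V := hG.nonempty
  haveI : Nonempty (VmT G m') := ⟨Sum.inl (Classical.arbitrary V)⟩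
  apply le_csInf (Set.range_nonempty _)
  rintro n ⟨z, rfl⟩
  dsimp only
  have h1 := hF_le_distToSet (p := p₁) hG hm z
  have h2 := hF_le_distToSet (p := p₂) hG hm z
  have h3 := hF_le_distToSet (p := p₃) hG hm z
  have h4 := sum_hF_ge hG hk z
  omega

lemma card_VmT_le [Fintype V] (inst : Fintype (VmT G m')) :
    @Fintype.card (VmT G m') inst ≤
      (Fintype.card V * (Fintype.card V + 2)) * (m' + 1) := by
  classical
  rw [← Nat.card_eq_fintype_card]
  rw [Nat.card_sum, Nat.card_sum, Nat.card_prod, Nat.card_prod]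
  have hfin : Nat.card (Fin m') = m' := by
    rw [Nat.card_eq_fintype_card, Fintype.card_fin]
  have hV : Nat.card V = Fintype.card V := Nat.card_eq_fintype_card
  have hOE : Nat.card (OEdge G) ≤ Fintype.card V * Fintype.card V := by
    have h1 : Nat.card (OEdge G) ≤ Nat.card (V × V) :=
      Nat.card_le_card_of_injective Subtype.val Subtype.val_injective
    rwa [Nat.card_prod, hV] at h1
  rw [hfin, hV]
  set n := Fintype.card V
  set q := Nat.card (OEdge G)
  nlinarith [Nat.zero_le n, Nat.zero_le m']

lemma pathSigma_pathM_inj (hm : 0 < m') {a b a' b' : V} {p : G.Walk a b} {q : G.Walk a' b'}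
    (h : pathSigma (Gm G m') (pathM (G := G) hm p) = pathSigma (Gm G m') (pathM (G := G) hm q)) :
    pathSigma G p = pathSigma G q := by
  unfold pathSigma at h ⊢
  obtain ⟨h1, h2⟩ := Sigma.mk.inj_iff.mp h
  have ha : a = a' := by
    simpa using h1
  subst ha
  obtain ⟨h3, h4⟩ := Sigma.mk.inj_iff.mp (eq_of_heq h2)
  have hb : b = b' := by
    simpa using h3
  subst hb
  have h5 : pathM (G := G) hm p = pathM (G := G) hm q := eq_of_heq h4
  have h6 : p.support = q.support := by
    have := congrArg Walk.support h5
    rw [← filterMap_pathM (G := G) hm p, ← filterMap_pathM (G := G) hm q, this]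
  rw [walk_eq_of_support_eq p q h6]
end ThreePathsAux

open ThreePathsAux

/-- The conjecture that any three longest paths of a finite connected graph have a
common vertex (`f(G, P) = 0`) is equivalent to the existence of a sublinear
non-decreasing function `g` bounding `f(G, P)` in terms of the order of `G`. -/
theorem conjecture_iff_sublinear_bound :
    (∀ (V : Type) [Fintype V] (G : SimpleGraph V), G.Connected →
      ∀ (u₁ v₁ u₂ v₂ u₃ v₃ : V) (p₁ : G.Walk u₁ v₁) (p₂ : G.Walk u₂ v₂) (p₃ : G.Walk u₃ v₃),
        IsLongestPath G p₁ → IsLongestPath G p₂ → IsLongestPath G p₃ →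
        pathSigma G p₁ ≠ pathSigma G p₂ → pathSigma G p₁ ≠ pathSigma G p₃ →
        pathSigma G p₂ ≠ pathSigma G p₃ →
        fThree G p₁ p₂ p₃ = 0) ↔
    (∃ g : ℕ → ℝ, Monotone g ∧
      Filter.Tendsto (fun n : ℕ => g n / n) Filter.atTop (nhds 0) ∧
      ∀ (V : Type) [Fintype V] (G : SimpleGraph V), G.Connected →
        ∀ (u₁ v₁ u₂ v₂ u₃ v₃ : V) (p₁ : G.Walk u₁ v₁) (p₂ : G.Walk u₂ v₂) (p₃ : G.Walk u₃ v₃),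
          IsLongestPath G p₁ → IsLongestPath G p₂ → IsLongestPath G p₃ →
          pathSigma G p₁ ≠ pathSigma G p₂ → pathSigma G p₁ ≠ pathSigma G p₃ →
          pathSigma G p₂ ≠ pathSigma G p₃ →
          (fThree G p₁ p₂ p₃ : ℝ) ≤ g (Fintype.card V)) := by
  constructor
  · intro h
    refine ⟨fun _ => 0, monotone_const, by simpa using tendsto_const_nhds, ?_⟩
    intro V _ G hG u₁ v₁ u₂ v₂ u₃ v₃ p₁ p₂ p₃ hl₁ hl₂ hl₃ h12 h13 h23
    rw [h V G hG _ _ _ _ _ _ p₁ p₂ p₃ hl₁ hl₂ hl₃ h12 h13 h23]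
    simp
  · rintro ⟨g, hmono, htend, hbound⟩
    intro V _ G hG u₁ v₁ u₂ v₂ u₃ v₃ p₁ p₂ p₃ hl₁ hl₂ hl₃ h12 h13 h23
    by_contra hk0
    have hk1 : 1 ≤ fThree G p₁ p₂ p₃ := Nat.one_le_iff_ne_zero.mpr hk0
    set k := fThree G p₁ p₂ p₃ with hkdef
    have hk' : ∀ x : V, k ≤ distToSet G x (walkVerts p₁) + distToSet G x (walkVerts p₂) +
        distToSet G x (walkVerts p₃) := fun x => Nat.sInf_le ⟨x, rfl⟩
    -- the maximum path length is positive
    have hLne0 : maxPathLength G ≠ 0 := by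
      intro hL0
      have hnoadj : ∀ x y : V, ¬ G.Adj x y := by
        intro x y hxy
        have hp : (Walk.cons hxy Walk.nil : G.Walk x y).IsPath := by
          rw [Walk.cons_isPath_iff]
          exact ⟨Walk.IsPath.nil, by simpa using G.ne_of_adj hxy⟩
        have := length_le_max hp
        rw [hL0] at this
        simp at this
      have hsub : ∀ x y : V, x = y := by
        intro x y
        obtain ⟨w⟩ := hG.preconnected x y
        cases w with
        | nil => rfl
        | cons hadj _ => exact absurd hadj (hnoadj _ _)
      have h1 : k ≤ distToSet G u₁ (walkVerts p₁) + distToSet G u₁ (walkVerts p₂) +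
          distToSet G u₁ (walkVerts p₃) := hk' u₁
      rw [distToSet_zero (mem_walkVerts.mpr (Walk.start_mem_support p₁)),
        distToSet_zero (mem_walkVerts.mpr ((hsub u₁ u₂) ▸ Walk.start_mem_support p₂)),
        distToSet_zero (mem_walkVerts.mpr ((hsub u₁ u₃) ▸ Walk.start_mem_support p₃))] at h1
      omega
    have hne : ∀ {a b : V} (p : G.Walk a b), IsLongestPath G p → a ≠ b := by
      intro a b p hl hab
      subst hab
      obtain ⟨hp, hlen⟩ := hl
      rw [Walk.isPath_iff_eq_nil.mp hp] at hlen
      exact hLne0 (by simpa using hlen.symm)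
    have hne1 := hne p₁ hl₁
    have hne2 := hne p₂ hl₂
    have hne3 := hne p₃ hl₃
    set n := Fintype.card V with hn
    set C := n * (n + 2) with hC
    have hn1 : 1 ≤ n := Fintype.card_pos_iff.mpr hG.nonempty
    have hC1 : 1 ≤ C := by
      have h0 : 1 * 1 ≤ n * (n + 2) := Nat.mul_le_mul hn1 (by omega)
      simpa [hC] using h0
    -- key inequality for every M ≥ 2
    have key : ∀ M : ℕ, 2 ≤ M → ((M * k : ℕ) : ℝ) ≤ g (C * M) := by
      intro M hM
      set m' := M - 1 with hm'def
      have hm : 0 < m' := by omega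
      have hM' : m' + 1 = M := by omega
      have hconn := gm_connected (m' := m') hG hm
      have hb := hbound (VmT G m') (Gm G m') hconn _ _ _ _ _ _
        (pathM hm p₁) (pathM hm p₂) (pathM hm p₃)
        (isLongest_pathM hm hl₁ hne1) (isLongest_pathM hm hl₂ hne2)
        (isLongest_pathM hm hl₃ hne3)
        (fun hc => h12 (pathSigma_pathM_inj hm hc))
        (fun hc => h13 (pathSigma_pathM_inj hm hc))
        (fun hc => h23 (pathSigma_pathM_inj hm hc))
      have hge := fThree_Gm_ge (m' := m') hG hm hk'
      rw [hM'] at hge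
      have hcard : Fintype.card (VmT G m') ≤ C * M := by
        have h2 := card_VmT_le (G := G) (m' := m') inferInstance
        rw [hM'] at h2
        rw [hC, hn]
        exact h2
      have hmg := hmono hcard
      calc ((M * k : ℕ) : ℝ) ≤ (fThree (Gm G m') (pathM hm p₁) (pathM hm p₂) (pathM hm p₃) : ℝ) := by
            exact_mod_cast hge
        _ ≤ g (Fintype.card (VmT G m')) := hb
        _ ≤ g (C * M) := hmg
    -- contradiction with sublinearity
    have hCpos : 0 < C := hC1
    have hφ : Filter.Tendsto (fun M : ℕ => C * M) Filter.atTop Filter.atTop := by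
      apply Filter.tendsto_atTop_mono (fun M => Nat.le_mul_of_pos_left M hCpos)
      exact Filter.tendsto_id
    have hcomp := htend.comp hφ
    have hev : ∀ᶠ M : ℕ in Filter.atTop,
        (k : ℝ) / (C : ℝ) ≤ ((fun n : ℕ => g n / n) ∘ fun M : ℕ => C * M) M := by
      filter_upwards [Filter.eventually_ge_atTop 2] with M hM
      have h1 := key M hM
      show (k : ℝ) / (C : ℝ) ≤ g (C * M) / ((C * M : ℕ) : ℝ)
      have hCMpos : (0 : ℝ) < ((C * M : ℕ) : ℝ) := by
        have : 0 < C * M := Nat.mul_pos hCpos (by omega)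
        exact_mod_cast this
      rw [div_le_div_iff₀ (by exact_mod_cast hCpos) hCMpos]
      push_cast at h1 ⊢
      nlinarith [h1]
    have hfin := ge_of_tendsto hcomp hev
    have hpos : (0 : ℝ) < (k : ℝ) / (C : ℝ) := by
      apply div_pos
      · exact_mod_cast hk1
      · exact_mod_cast hCpos
    linarith
end
end
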